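/- arXiv:1712.08137 — 3 statements merged into one kernel-verified Lean document; each statement's English description precedes it below -/
import Mathlib

section
/- Let k̄ and l̄ be nonnegative integers and let k be an integer with −l̄ ≤ k ≤ k̄. Then q^{k̄,(n)}(k) ≤ ∑_{i=1}^{m} q̃^{(n)}(2k̄ − k + 2i) and q_{l̄}^{(n)}(k) ≤ ∑_{i=1}^{m} q̃^{(n)}(2l̄ + k + 2i). -/
open Finset

open scoped Classical

noncomputable section

namespace HScut

/-- Level of a jump path `s : Fin n → ℤ` at time `t` (sum of the first `t` jumps). -/
def levelAt (n : ℕ) (s : Fin n → ℤ) (t : ℕ) : ℤ :=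
  ∑ i ∈ Finset.univ.filter (fun i : Fin n => (i : ℕ) < t), s i

/-- Jump paths of length `n` with jumps of amplitude at most `m`. -/
def paths (n m : ℕ) : Finset (Fin n → ℤ) :=
  Fintype.piFinset fun _ => Finset.Icc (-(m : ℤ)) (m : ℤ)

/-- Weight `π(s) = ∏ q (s i)` of a jump path. -/
def pathWeight (n : ℕ) (q : ℤ → ℝ) (s : Fin n → ℤ) : ℝ :=
  ∏ i, q (s i)

/-- Modified weight `π̃(s)`, where each `q (±i)` (`i ≠ 0`) is replaced by `max (q i) (q (-i))`
(which equals `w_i / n`). -/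
def modWeight (n : ℕ) (q : ℤ → ℝ) (s : Fin n → ℤ) : ℝ :=
  ∏ i, (if s i = 0 then q 0 else max (q (s i)) (q (-s i)))

/-- `q^{(n)}(k)`: probability of a net balance of `k` cumulative jumps at maturity. -/
def qfull (n m : ℕ) (q : ℤ → ℝ) (k : ℤ) : ℝ :=
  ∑ s ∈ (paths n m).filter (fun s => levelAt n s n = k), pathWeight n q s

/-- `q̃^{(n)}(k)`: enlarged probability of a net balance of `k` cumulative jumps at maturity. -/
def qtilde (n m : ℕ) (q : ℤ → ℝ) (k : ℤ) : ℝ :=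
  ∑ s ∈ (paths n m).filter (fun s => levelAt n s n = k), modWeight n q s

/-- `q^{k̄,(n)}(k)`: probability of a net balance of `k` jumps at maturity while reaching at
some time a net balance higher than `k̄`. -/
def qup (n m : ℕ) (q : ℤ → ℝ) (kbar : ℕ) (k : ℤ) : ℝ :=
  ∑ s ∈ (paths n m).filter
      (fun s => levelAt n s n = k ∧ ∃ t ≤ n, (kbar : ℤ) + 1 ≤ levelAt n s t),
    pathWeight n q s

/-- `q_{l̄}^{(n)}(k)`: probability of a net balance of `k` jumps at maturity while reaching at
some time a net balance lower than `-l̄`. -/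
def qdown (n m : ℕ) (q : ℤ → ℝ) (lbar : ℕ) (k : ℤ) : ℝ :=
  ∑ s ∈ (paths n m).filter
      (fun s => levelAt n s n = k ∧ ∃ t ≤ n, levelAt n s t ≤ -(lbar : ℤ) - 1),
    pathWeight n q s

/-- `q^{cut,(n)}(k)`: probability of reaching level `k` at maturity without ever leaving the
band `[-l̄, k̄]`. -/
def qcut (n m : ℕ) (q : ℤ → ℝ) (kbar lbar : ℕ) (k : ℤ) : ℝ :=
  ∑ s ∈ (paths n m).filter
      (fun s => levelAt n s n = k ∧
        ∀ t ≤ n, -(lbar : ℤ) ≤ levelAt n s t ∧ levelAt n s t ≤ (kbar : ℤ)),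
    pathWeight n q s

/-- `P(j) = C(n,j) p^j (1-p)^(n-j)`. -/
def binomP (n : ℕ) (p : ℝ) (j : ℕ) : ℝ :=
  (n.choose j : ℝ) * p ^ j * (1 - p) ^ (n - j)

/-- Put payoff at the terminal node `(n, j, k)`. -/
def putPayoff (n : ℕ) (S0 K σ dt h : ℝ) (j : ℕ) (k : ℤ) : ℝ :=
  max (K - S0 * Real.exp ((2 * (j : ℝ) - (n : ℝ)) * (σ * Real.sqrt dt) + h * (k : ℝ))) 0

/-- European put value `V` on the full tree. -/
def Vput (n m : ℕ) (q : ℤ → ℝ) (p S0 K σ τ h r : ℝ) : ℝ :=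
  Real.exp (-(r * τ)) *
    ∑ k ∈ Finset.Icc (-((m : ℤ) * n)) ((m : ℤ) * n), ∑ j ∈ Finset.range (n + 1),
      putPayoff n S0 K σ (τ / n) h j k * binomP n p j * qfull n m q k

/-- European put value `V^{TT}` on the truncated tree. -/
def VTT (n m : ℕ) (q : ℤ → ℝ) (p S0 K σ τ h r : ℝ) (kbar lbar : ℕ) : ℝ :=
  Real.exp (-(r * τ)) *
    ∑ k ∈ Finset.Icc (-(lbar : ℤ)) (kbar : ℤ), ∑ j ∈ Finset.range (n + 1),
      putPayoff n S0 K σ (τ / n) h j k * binomP n p j * qcut n m q kbar lbar k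

/-- The sequence `W_i`: `W₁ = w₁`, `W_{i+1} = w_{i+1} + W_i^{(i+1)/i}` (real powers). -/
def Wseq (w : ℕ → ℝ) : ℕ → ℝ
  | 0 => 0
  | 1 => w 1
  | (i + 2) => w (i + 2) + Wseq w (i + 1) ^ (((i : ℝ) + 2) / ((i : ℝ) + 1))

/-- `M_i = max { W_i, W_i^{(1-i)/i} }` (real powers). -/
def Mseq (w : ℕ → ℝ) (i : ℕ) : ℝ :=
  max (Wseq w i) (Wseq w i ^ ((1 - (i : ℝ)) / (i : ℝ)))

/-- `G = 2 m max{W_m, 1} e^{W_m} ∏_{i=1}^{m-1} M_i²`. -/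
def Gconst (w : ℕ → ℝ) (m : ℕ) : ℝ :=
  2 * m * max (Wseq w m) 1 * Real.exp (Wseq w m) * ∏ i ∈ Finset.Icc 1 (m - 1), (Mseq w i) ^ 2

/-- Value of the underlying at a node with (real) time index `i`, `j` up Brownian moves and
net jump level `l`. -/
def Sval (S0 σ dt h : ℝ) (i : ℝ) (j : ℕ) (l : ℤ) : ℝ :=
  S0 * Real.exp ((2 * (j : ℝ) - i) * (σ * Real.sqrt dt) + (l : ℝ) * h)

/-- Full backward European put price; `VEfull … d j l` is the value `V_E(n-d, j, l)`
(`d` = number of remaining steps). -/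
def VEfull (n m : ℕ) (q : ℤ → ℝ) (p dt S0 K σ h r : ℝ) : ℕ → ℕ → ℤ → ℝ
  | 0, j, l => max (K - Sval S0 σ dt h (n : ℝ) j l) 0
  | (d + 1), j, l =>
      Real.exp (-(r * dt)) *
        ∑ k ∈ Finset.Icc (-(m : ℤ)) (m : ℤ),
          (VEfull n m q p dt S0 K σ h r d (j + 1) (l + k) * p +
            VEfull n m q p dt S0 K σ h r d j (l + k) * (1 - p)) * q k

/-- Full backward American put price; `VAfull … d j l` is the value `V_A(n-d, j, l)`. -/
def VAfull (n m : ℕ) (q : ℤ → ℝ) (p dt S0 K σ h r : ℝ) : ℕ → ℕ → ℤ → ℝ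
  | 0, j, l => max (K - Sval S0 σ dt h (n : ℝ) j l) 0
  | (d + 1), j, l =>
      max
        (Real.exp (-(r * dt)) *
          ∑ k ∈ Finset.Icc (-(m : ℤ)) (m : ℤ),
            (VAfull n m q p dt S0 K σ h r d (j + 1) (l + k) * p +
              VAfull n m q p dt S0 K σ h r d j (l + k) * (1 - p)) * q k)
        (K - Sval S0 σ dt h ((n : ℝ) - (d + 1)) j l)

/-- Truncated backward European put price with boundary value `b`;
`VEtr … d j l` is the value `V_E^b(n-d, j, l)`. -/
def VEtr (n m : ℕ) (q : ℤ → ℝ) (p dt S0 K σ h r b : ℝ) (kbar lbar : ℕ) :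
    ℕ → ℕ → ℤ → ℝ
  | 0, j, l =>
      if -(lbar : ℤ) ≤ l ∧ l ≤ (kbar : ℤ) then max (K - Sval S0 σ dt h (n : ℝ) j l) 0 else b
  | (d + 1), j, l =>
      if -(lbar : ℤ) ≤ l ∧ l ≤ (kbar : ℤ) then
        Real.exp (-(r * dt)) *
          ∑ k ∈ Finset.Icc (-(m : ℤ)) (m : ℤ),
            (VEtr n m q p dt S0 K σ h r b kbar lbar d (j + 1) (l + k) * p +
              VEtr n m q p dt S0 K σ h r b kbar lbar d j (l + k) * (1 - p)) * q k
      else b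

/-- Truncated backward American put price with boundary value `b`;
`VAtr … d j l` is the value `V_A^b(n-d, j, l)`. -/
def VAtr (n m : ℕ) (q : ℤ → ℝ) (p dt S0 K σ h r b : ℝ) (kbar lbar : ℕ) :
    ℕ → ℕ → ℤ → ℝ
  | 0, j, l =>
      if -(lbar : ℤ) ≤ l ∧ l ≤ (kbar : ℤ) then max (K - Sval S0 σ dt h (n : ℝ) j l) 0 else b
  | (d + 1), j, l =>
      if -(lbar : ℤ) ≤ l ∧ l ≤ (kbar : ℤ) then
        max
          (Real.exp (-(r * dt)) *
            ∑ k ∈ Finset.Icc (-(m : ℤ)) (m : ℤ),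
              (VAtr n m q p dt S0 K σ h r b kbar lbar d (j + 1) (l + k) * p +
                VAtr n m q p dt S0 K σ h r b kbar lbar d j (l + k) * (1 - p)) * q k)
          (K - Sval S0 σ dt h ((n : ℝ) - (d + 1)) j l)
      else b

/-- The sum, over all jump-path prefixes that first exit the band `[-l̄, k̄]` at some time
`1 ≤ i ≤ n`, of the prefix probability times `b e^{-r i Δt}`. -/
def exitSum (n m : ℕ) (q : ℤ → ℝ) (r dt : ℝ) (kbar lbar : ℕ) (b : ℝ) : ℝ :=
  ∑ i ∈ Finset.Icc 1 n,
    ∑ y ∈ (paths i m).filter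
        (fun y =>
          (∀ t < i, -(lbar : ℤ) ≤ levelAt i y t ∧ levelAt i y t ≤ (kbar : ℤ)) ∧
          ¬(-(lbar : ℤ) ≤ levelAt i y i ∧ levelAt i y i ≤ (kbar : ℤ))),
      pathWeight i q y * (b * Real.exp (-(r * (i : ℝ) * dt)))

end HScut

open HScut


section ReflectionAux

lemma lvl_zero (n : ℕ) (s : Fin n → ℤ) : levelAt n s 0 = 0 := by
  simp [levelAt]

lemma lvl_split (n : ℕ) (s : Fin n → ℤ) {a b : ℕ} (h : a ≤ b) :
    levelAt n s b = levelAt n s a +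
      ∑ i ∈ Finset.univ.filter (fun i : Fin n => a ≤ (i : ℕ) ∧ (i : ℕ) < b), s i := by
  unfold levelAt
  rw [← Finset.sum_union (by rw [Finset.disjoint_left]; intro i; simp; omega)]
  apply Finset.sum_congr _ (fun _ _ => rfl)
  ext i
  simp only [Finset.mem_union, Finset.mem_filter, Finset.mem_univ, true_and]
  omega

lemma lvl_congr (n : ℕ) (s s' : Fin n → ℤ) (t : ℕ)
    (h : ∀ i : Fin n, (i : ℕ) < t → s i = s' i) : levelAt n s t = levelAt n s' t := by
  apply Finset.sum_congr rfl
  intro i hi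
  exact h i (by simpa using hi)

lemma lvl_flip (n : ℕ) (s : Fin n → ℤ) {τ t : ℕ} (h : τ ≤ t) :
    levelAt n (fun i => if (i : ℕ) < τ then s i else -(s i)) t
      = 2 * levelAt n s τ - levelAt n s t := by
  rw [lvl_split n _ h, lvl_split n s h,
    lvl_congr n (fun i => if (i : ℕ) < τ then s i else -(s i)) s τ (fun i hi => if_pos hi)]
  have : ∑ i ∈ Finset.univ.filter (fun i : Fin n => τ ≤ (i : ℕ) ∧ (i : ℕ) < t),
      (if (i : ℕ) < τ then s i else -(s i))
      = - ∑ i ∈ Finset.univ.filter (fun i : Fin n => τ ≤ (i : ℕ) ∧ (i : ℕ) < t), s i := by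
    rw [← Finset.sum_neg_distrib]
    apply Finset.sum_congr rfl
    intro i hi
    simp only [Finset.mem_filter, Finset.mem_univ, true_and] at hi
    rw [if_neg (by omega)]
  rw [this]; ring

lemma lvl_neg (n : ℕ) (s : Fin n → ℤ) (t : ℕ) :
    levelAt n (fun i => -(s i)) t = - levelAt n s t := by
  simp [levelAt]

lemma mem_paths_iff (n m : ℕ) (s : Fin n → ℤ) :
    s ∈ paths n m ↔ ∀ i, -(m : ℤ) ≤ s i ∧ s i ≤ (m : ℤ) := by
  simp [paths, Fintype.mem_piFinset, Finset.mem_Icc]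

lemma modW_nonneg (n m : ℕ) (q : ℤ → ℝ)
    (hq : ∀ l : ℤ, -(m : ℤ) ≤ l → l ≤ (m : ℤ) → 0 ≤ q l)
    (s : Fin n → ℤ) (hs : s ∈ paths n m) : 0 ≤ modWeight n q s := by
  rw [mem_paths_iff] at hs
  apply Finset.prod_nonneg
  intro i _
  by_cases h : s i = 0
  · rw [if_pos h]
    exact hq 0 (by omega) (by omega)
  · rw [if_neg h]
    exact le_trans (hq (s i) (hs i).1 (hs i).2) (le_max_left _ _)

lemma pw_le_modW (n m : ℕ) (q : ℤ → ℝ)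
    (hq : ∀ l : ℤ, -(m : ℤ) ≤ l → l ≤ (m : ℤ) → 0 ≤ q l)
    (s : Fin n → ℤ) (hs : s ∈ paths n m) : pathWeight n q s ≤ modWeight n q s := by
  rw [mem_paths_iff] at hs
  apply Finset.prod_le_prod
  · intro i _
    exact hq (s i) (hs i).1 (hs i).2
  · intro i _
    by_cases h : s i = 0
    · simp [h]
    · rw [if_neg h]
      exact le_max_left _ _

lemma modW_flip (n : ℕ) (q : ℤ → ℝ) (s : Fin n → ℤ) (τ : ℕ) :
    modWeight n q (fun i => if (i : ℕ) < τ then s i else -(s i)) = modWeight n q s := by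
  unfold modWeight
  apply Finset.prod_congr rfl
  intro i _
  by_cases h : (i : ℕ) < τ
  · simp [h]
  · by_cases h0 : s i = 0
    · simp [h, h0]
    · simp only [h, if_false, neg_eq_zero, h0, neg_neg]
      exact max_comm _ _

lemma up_bound (n m : ℕ) (q : ℤ → ℝ)
    (hq : ∀ l : ℤ, -(m : ℤ) ≤ l → l ≤ (m : ℤ) → 0 ≤ q l)
    (kbar : ℕ) (k : ℤ) :
    qup n m q kbar k ≤
      ∑ i ∈ Finset.Icc 1 m, qtilde n m q (2 * (kbar : ℤ) - k + 2 * (i : ℤ)) := by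
  classical
  set P : (Fin n → ℤ) → Prop :=
    fun s => ∃ t ≤ n, (kbar : ℤ) + 1 ≤ levelAt n s t with hP
  set R : (Fin n → ℤ) → (Fin n → ℤ) :=
    fun s => if h : P s then (fun i => if (i : ℕ) < Nat.find h then s i else -(s i)) else s
    with hRdef
  set D := (paths n m).filter
    (fun s => levelAt n s n = k ∧ ∃ t ≤ n, (kbar : ℤ) + 1 ≤ levelAt n s t) with hD
  set B := (Finset.Icc 1 m).biUnion
    (fun i => (paths n m).filter
      (fun s => levelAt n s n = 2 * (kbar : ℤ) - k + 2 * (i : ℤ))) with hB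
  -- basic facts about the first passage time
  have hfind : ∀ (s : Fin n → ℤ) (h : P s),
      Nat.find h ≤ n ∧ (kbar : ℤ) + 1 ≤ levelAt n s (Nat.find h) ∧ 1 ≤ Nat.find h ∧
      (∀ t < Nat.find h, levelAt n s t ≤ (kbar : ℤ)) := by
    intro s h
    obtain ⟨h1, h2⟩ := Nat.find_spec h
    have hτn : Nat.find h ≤ n := h1
    have hpos : 1 ≤ Nat.find h := by
      rcases Nat.eq_zero_or_pos (Nat.find h) with h0 | h0
      · exfalso
        rw [h0, lvl_zero] at h2
        omega
      · exact h0
    refine ⟨hτn, h2, hpos, ?_⟩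
    intro t ht
    have := Nat.find_min h ht
    push_neg at this
    have := this (le_trans (le_of_lt ht) hτn)
    omega
  -- the reflection agrees with s before time find, flips afterwards
  have hReq : ∀ (s : Fin n → ℤ) (h : P s),
      R s = fun i : Fin n => if (i : ℕ) < Nat.find h then s i else -(s i) := by
    intro s h
    simp only [hRdef, dif_pos h]
  -- levels of the reflected path
  have hRlvl_le : ∀ (s : Fin n → ℤ) (h : P s) (t : ℕ), t ≤ Nat.find h →
      levelAt n (R s) t = levelAt n s t := by
    intro s h t ht
    rw [hReq s h]
    exact lvl_congr n _ s t (fun i hi => if_pos (lt_of_lt_of_le hi ht))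
  have hRlvl_ge : ∀ (s : Fin n → ℤ) (h : P s) (t : ℕ), Nat.find h ≤ t →
      levelAt n (R s) t = 2 * levelAt n s (Nat.find h) - levelAt n s t := by
    intro s h t ht
    rw [hReq s h]
    exact lvl_flip n s ht
  -- R is an involution on P
  have hRP : ∀ (s : Fin n → ℤ) (h : P s), P (R s) := by
    intro s h
    obtain ⟨h1, h2, h3, h4⟩ := hfind s h
    exact ⟨Nat.find h, h1, by rw [hRlvl_le s h _ le_rfl]; exact h2⟩
  have hRfind : ∀ (s : Fin n → ℤ) (h : P s), Nat.find (hRP s h) = Nat.find h := by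
    intro s h
    obtain ⟨h1, h2, h3, h4⟩ := hfind s h
    rw [Nat.find_eq_iff]
    constructor
    · exact ⟨h1, by rw [hRlvl_le s h _ le_rfl]; exact h2⟩
    · intro t ht
      push_neg
      intro htn
      rw [hRlvl_le s h t (le_of_lt ht)]
      have := h4 t ht
      omega
  have hRR : ∀ (s : Fin n → ℤ), P s → R (R s) = s := by
    intro s h
    have h' := hRP s h
    funext i
    rw [hReq (R s) h', hRfind s h, hReq s h]
    by_cases hi : (i : ℕ) < Nat.find h
    · simp only [hi, if_true]
    · simp only [hi, if_false, neg_neg]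
  have hinj : Set.InjOn R D := by
    intro a ha b hb hab
    have hPa : P a := (Finset.mem_filter.mp ha).2.2
    have hPb : P b := (Finset.mem_filter.mp hb).2.2
    calc a = R (R a) := (hRR a hPa).symm
    _ = R (R b) := by rw [hab]
    _ = b := hRR b hPb
  -- image of D under R lands in B
  have hRpaths : ∀ s ∈ paths n m, R s ∈ paths n m := by
    intro s hs
    rw [mem_paths_iff] at hs ⊢
    intro i
    by_cases h : P s
    · rw [hReq s h]
      by_cases hi : (i : ℕ) < Nat.find h
      · simpa only [hi, if_true] using hs i
      · simp only [hi, if_false]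
        have := hs i
        omega
    · simp only [hRdef, dif_neg h]
      exact hs i
  have hsub : D.image R ⊆ B := by
    intro t ht
    obtain ⟨s, hsD, rfl⟩ := Finset.mem_image.mp ht
    obtain ⟨hsp, hlvl, hPs⟩ := Finset.mem_filter.mp hsD
    have hPs : P s := hPs
    obtain ⟨h1, h2, h3, h4⟩ := hfind s hPs
    -- level at find is at most kbar + m
    have hstep : levelAt n s (Nat.find hPs)
        = levelAt n s (Nat.find hPs - 1) + s ⟨Nat.find hPs - 1, by omega⟩ := by
      rw [lvl_split n s (show Nat.find hPs - 1 ≤ Nat.find hPs by omega)]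
      congr 1
      rw [show Finset.univ.filter
          (fun i : Fin n => Nat.find hPs - 1 ≤ (i : ℕ) ∧ (i : ℕ) < Nat.find hPs)
          = {⟨Nat.find hPs - 1, by omega⟩} from ?_]
      · rw [Finset.sum_singleton]
      · ext i
        simp only [Finset.mem_filter, Finset.mem_univ, true_and, Finset.mem_singleton]
        constructor
        · intro hi
          exact Fin.ext (show (i : ℕ) = Nat.find hPs - 1 by omega)
        · intro hi
          subst hi
          exact ⟨le_rfl, Nat.sub_lt (by omega) (by omega)⟩
    have hsm : s ⟨Nat.find hPs - 1, by omega⟩ ≤ (m : ℤ) :=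
      ((mem_paths_iff n m s).mp hsp ⟨Nat.find hPs - 1, by omega⟩).2
    have hprev : levelAt n s (Nat.find hPs - 1) ≤ (kbar : ℤ) := h4 _ (by omega)
    have hub : levelAt n s (Nat.find hPs) ≤ (kbar : ℤ) + (m : ℤ) := by omega
    set a := levelAt n s (Nat.find hPs) with ha
    rw [hB, Finset.mem_biUnion]
    refine ⟨(a - kbar).toNat, ?_, ?_⟩
    · rw [Finset.mem_Icc]
      omega
    · rw [Finset.mem_filter]
      refine ⟨hRpaths s hsp, ?_⟩
      rw [hRlvl_ge s hPs n h1, hlvl, ← ha]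
      have : ((a - kbar).toNat : ℤ) = a - kbar := by omega
      rw [this]
      ring
  -- weights
  have hmodR : ∀ s ∈ D, modWeight n q (R s) = modWeight n q s := by
    intro s hs
    have hPs : P s := (Finset.mem_filter.mp hs).2.2
    rw [hReq s hPs]
    exact modW_flip n q s _
  have hDsub : D ⊆ paths n m := Finset.filter_subset _ _
  calc qup n m q kbar k = ∑ s ∈ D, pathWeight n q s := rfl
  _ ≤ ∑ s ∈ D, modWeight n q (R s) := by
      apply Finset.sum_le_sum
      intro s hs
      rw [hmodR s hs]
      exact pw_le_modW n m q hq s (hDsub hs)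
  _ = ∑ t ∈ D.image R, modWeight n q t := (Finset.sum_image (fun a ha b hb => hinj ha hb)).symm
  _ ≤ ∑ t ∈ B, modWeight n q t := by
      apply Finset.sum_le_sum_of_subset_of_nonneg hsub
      intro t htB _
      have : t ∈ paths n m := by
        rw [hB, Finset.mem_biUnion] at htB
        obtain ⟨i, _, hti⟩ := htB
        exact (Finset.mem_filter.mp hti).1
      exact modW_nonneg n m q hq t this
  _ = ∑ i ∈ Finset.Icc 1 m, qtilde n m q (2 * (kbar : ℤ) - k + 2 * (i : ℤ)) := by
      have hdisj : (Finset.Icc 1 m : Set ℕ).PairwiseDisjoint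
          (fun i : ℕ => (paths n m).filter
            (fun s => levelAt n s n = 2 * (kbar : ℤ) - k + 2 * (i : ℤ))) := by
        intro i hi j hj hij
        rw [Function.onFun, Finset.disjoint_left]
        intro s hsi hsj
        apply hij
        have h1 := (Finset.mem_filter.mp hsi).2
        have h2 := (Finset.mem_filter.mp hsj).2
        have : (i : ℤ) = (j : ℤ) := by omega
        exact_mod_cast this
      rw [hB, Finset.sum_biUnion hdisj]
      exact Finset.sum_congr rfl (fun i _ => rfl)

lemma qtilde_neg (n m : ℕ) (q : ℤ → ℝ) (k : ℤ) :
    qtilde n m (fun l => q (-l)) k = qtilde n m q k := by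
  unfold qtilde modWeight
  apply Finset.sum_congr rfl
  intro s _
  apply Finset.prod_congr rfl
  intro i _
  by_cases h : s i = 0
  · simp [h]
  · simp only [h, if_false, neg_neg]
    exact max_comm _ _

lemma qdown_eq_qup (n m : ℕ) (q : ℤ → ℝ) (lbar : ℕ) (k : ℤ) :
    qdown n m q lbar k = qup n m (fun l => q (-l)) lbar (-k) := by
  unfold qdown qup
  apply Finset.sum_nbij' (i := fun s => fun j => -(s j)) (j := fun s => fun j => -(s j))
  · intro s hs
    simp only [Finset.mem_filter, mem_paths_iff, lvl_neg] at hs ⊢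
    obtain ⟨hp, hl, t, ht, hlt⟩ := hs
    exact ⟨fun i => ⟨by have := hp i; omega, by have := hp i; omega⟩, by omega,
      t, ht, by omega⟩
  · intro s hs
    simp only [Finset.mem_filter, mem_paths_iff, lvl_neg] at hs ⊢
    obtain ⟨hp, hl, t, ht, hlt⟩ := hs
    exact ⟨fun i => ⟨by have := hp i; omega, by have := hp i; omega⟩, by omega,
      t, ht, by omega⟩
  · intro s _
    funext i
    simp
  · intro s _
    funext i
    simp
  · intro s _
    unfold pathWeight
    apply Finset.prod_congr rfl
    intro i _
    simp

end ReflectionAux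

/-- Reflection bound (general m): `q^{k̄,(n)}(k) ≤ ∑_{i=1}^{m} q̃^{(n)}(2k̄ − k + 2i)` and
`q_{l̄}^{(n)}(k) ≤ ∑_{i=1}^{m} q̃^{(n)}(2l̄ + k + 2i)` for all `−l̄ ≤ k ≤ k̄`. -/
theorem reflection_bound (n m : ℕ) (hn : 1 ≤ n) (hm : 1 ≤ m) (q : ℤ → ℝ)
    (hq : ∀ l : ℤ, -(m : ℤ) ≤ l → l ≤ (m : ℤ) → 0 ≤ q l)
    (hsum : ∑ l ∈ Finset.Icc (-(m : ℤ)) (m : ℤ), q l = 1)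
    (kbar lbar : ℕ) (k : ℤ) (hkl : -(lbar : ℤ) ≤ k) (hkk : k ≤ (kbar : ℤ)) :
    qup n m q kbar k ≤
        ∑ i ∈ Finset.Icc 1 m, qtilde n m q (2 * (kbar : ℤ) - k + 2 * (i : ℤ)) ∧
    qdown n m q lbar k ≤
        ∑ i ∈ Finset.Icc 1 m, qtilde n m q (2 * (lbar : ℤ) + k + 2 * (i : ℤ)) := by
  constructor
  · exact up_bound n m q hq kbar k
  · have hq' : ∀ l : ℤ, -(m : ℤ) ≤ l → l ≤ (m : ℤ) → 0 ≤ (fun l => q (-l)) l :=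
      fun l h1 h2 => hq (-l) (by omega) (by omega)
    rw [qdown_eq_qup]
    calc qup n m (fun l => q (-l)) lbar (-k)
        ≤ ∑ i ∈ Finset.Icc 1 m, qtilde n m (fun l => q (-l))
            (2 * (lbar : ℤ) - (-k) + 2 * (i : ℤ)) := up_bound n m (fun l => q (-l)) hq' lbar (-k)
      _ = ∑ i ∈ Finset.Icc 1 m, qtilde n m q (2 * (lbar : ℤ) + k + 2 * (i : ℤ)) := by
          apply Finset.sum_congr rfl
          intro i _
          rw [qtilde_neg]
          ring_nf
end
end

section
/- For every integer k with m·⌈2W_m − 1⌉ ≤ k ≤ m·n one has q̃^{(n)}(k) ≤ G · W_m^{⌊k/m⌋} / ⌊k/m⌋!. -/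
open Finset

open scoped Classical

noncomputable section

open HScut


namespace HScut

/-- Capped one-sided coefficient sum:
`cS w p j = ∑_{a₁,…,a_p ≥ 0, ∑ i aᵢ = j} ∏ wᵢ^{aᵢ}/aᵢ!`. -/
def cS (w : ℕ → ℝ) : ℕ → ℕ → ℝ
  | 0, j => if j = 0 then 1 else 0
  | (p+1), j => ∑ a ∈ Finset.range (j+1),
      if (p+1)*a ≤ j then w (p+1) ^ a / (Nat.factorial a : ℝ) * cS w p (j - (p+1)*a) else 0

lemma cS_nonneg {w : ℕ → ℝ} : ∀ p, (∀ i, i ≤ p → 0 ≤ w i) → ∀ j, 0 ≤ cS w p j := by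
  intro p
  induction p with
  | zero => intro _ j; simp only [cS]; split <;> norm_num
  | succ p ih =>
    intro hw j
    rw [cS]
    refine Finset.sum_nonneg fun a _ => ?_
    split
    · exact mul_nonneg (div_nonneg (pow_nonneg (hw _ le_rfl) _) (by positivity))
        (ih (fun i hi => hw i (by omega)) _)
    · exact le_rfl

lemma Wseq_one (w : ℕ → ℝ) : Wseq w 1 = w 1 := rfl

lemma Wseq_succ (w : ℕ → ℝ) {p : ℕ} (hp : 1 ≤ p) :
    Wseq w (p+1) = w (p+1) + Wseq w p ^ (((p : ℝ) + 1) / (p : ℝ)) := by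
  obtain ⟨i, rfl⟩ : ∃ i, p = i + 1 := ⟨p - 1, by omega⟩
  show Wseq w (i + 2) = _
  rw [Wseq]
  congr 2 <;> (push_cast; ring)

lemma Wseq_pos {w : ℕ → ℝ} (h1 : 0 < w 1) :
    ∀ p, 1 ≤ p → (∀ i, i ≤ p → 0 ≤ w i) → 0 < Wseq w p := by
  intro p
  induction p with
  | zero => omega
  | succ p ih =>
    intro hp hw
    rcases Nat.eq_zero_or_pos p with h | h
    · subst h; simpa [Wseq_one] using h1
    · have hp1 : 1 ≤ p := h
      rw [Wseq_succ w hp1]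
      have hW := ih hp1 (fun i hi => hw i (by omega))
      have h2 : (0:ℝ) < Wseq w p ^ (((p : ℝ) + 1) / (p : ℝ)) := Real.rpow_pos_of_pos hW _
      have := hw (p+1) le_rfl
      linarith

lemma Mseq_nonneg {w : ℕ → ℝ} (h1 : 0 < w 1) {i : ℕ} (hi : 1 ≤ i)
    (hw : ∀ i', i' ≤ i → 0 ≤ w i') : 0 ≤ Mseq w i :=
  le_max_of_le_left (Wseq_pos h1 i hi hw).le

lemma prodM_nonneg {w : ℕ → ℝ} (h1 : 0 < w 1) (p : ℕ) (hw : ∀ i, i ≤ p → 0 ≤ w i) :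
    0 ≤ ∏ i ∈ Finset.Icc 1 p, Mseq w i := by
  refine Finset.prod_nonneg fun i hi => ?_
  have h := Finset.mem_Icc.mp hi
  exact Mseq_nonneg h1 h.1 (fun i' hi' => hw i' (le_trans hi' h.2))

lemma binom_sum (x y : ℝ) (t : ℕ) :
    ∑ a ∈ range (t+1), x ^ a * y ^ (t-a) / ((Nat.factorial a : ℝ) * (Nat.factorial (t-a) : ℝ))
      = (x + y) ^ t / (Nat.factorial t : ℝ) := by
  rw [add_pow, Finset.sum_div]
  refine Finset.sum_congr rfl fun a ha => ?_
  have hat : a ≤ t := by simpa using Nat.lt_succ_iff.mp (Finset.mem_range.mp ha)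
  rw [Nat.cast_choose ℝ hat]
  have h1 : (Nat.factorial a : ℝ) ≠ 0 := Nat.cast_ne_zero.mpr (Nat.factorial_ne_zero a)
  have h2 : (Nat.factorial (t-a) : ℝ) ≠ 0 := Nat.cast_ne_zero.mpr (Nat.factorial_ne_zero _)
  have h3 : (Nat.factorial t : ℝ) ≠ 0 := Nat.cast_ne_zero.mpr (Nat.factorial_ne_zero t)
  field_simp

/-- the key termwise inequality -/
lemma key_term {w : ℕ → ℝ} {p : ℕ} (hp : 1 ≤ p) (hW : 0 < Wseq w p) (x : ℕ) :
    Wseq w p ^ (x/p) / (Nat.factorial (x/p) : ℝ)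
      ≤ Mseq w p * ((Wseq w p ^ (((p:ℝ)+1)/(p:ℝ))) ^ (x/(p+1)) / (Nat.factorial (x/(p+1)) : ℝ)) := by
  set W := Wseq w p with hWdef
  set s := x / p with hs
  set u := x / (p+1) with hu
  have hus : u ≤ s := Nat.div_le_div_left (Nat.le_succ p) hp
  have e1 : p * s + x % p = x := by rw [hs]; exact Nat.div_add_mod x p
  have e2 : (p+1) * u + x % (p+1) = x := by rw [hu]; exact Nat.div_add_mod x (p+1)
  have m1 : x % p < p := Nat.mod_lt _ (by omega)
  have m2 : x % (p+1) < p+1 := Nat.mod_lt _ (by omega)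
  have i1 : (p+1)*u ≤ p*s + (p-1) := by omega
  have i2 : p*s ≤ (p+1)*u + p := by omega
  have hp0 : (0:ℝ) < (p:ℝ) := by exact_mod_cast hp
  set X : ℝ := W ^ (((p:ℝ)+1)/(p:ℝ)) with hX
  set δ : ℝ := (s:ℝ) - ((p:ℝ)+1)/(p:ℝ) * (u:ℝ) with hδ
  have c1 : ((p:ℝ)+1)*(u:ℝ) ≤ (p:ℝ)*(s:ℝ) + ((p:ℝ)-1) := by
    have : (((p+1)*u : ℕ) : ℝ) ≤ ((p*s + (p-1) : ℕ) : ℝ) := by exact_mod_cast i1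
    push_cast at this
    have hc : ((p - 1 : ℕ) : ℝ) = (p:ℝ) - 1 := by
      have : 1 ≤ p := hp; push_cast [this]; ring
    rw [hc] at this; linarith
  have c2 : (p:ℝ)*(s:ℝ) ≤ ((p:ℝ)+1)*(u:ℝ) + (p:ℝ) := by exact_mod_cast i2
  have hp0' : (p:ℝ) ≠ 0 := ne_of_gt hp0
  have hδp : δ * (p:ℝ) = (p:ℝ)*(s:ℝ) - ((p:ℝ)+1)*(u:ℝ) := by
    rw [hδ]; field_simp
  have hδ1 : δ ≤ 1 := by
    have h : δ * (p:ℝ) ≤ 1 * (p:ℝ) := by rw [hδp]; linarith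
    exact le_of_mul_le_mul_right h hp0
  have hδ2 : (1-(p:ℝ))/(p:ℝ) ≤ δ := by
    rw [div_le_iff₀ hp0]
    rw [hδp]; linarith
  have hXu : X ^ u = W ^ ((((p:ℝ)+1)/(p:ℝ)) * (u:ℝ)) := by
    rw [hX, ← Real.rpow_natCast (W ^ _) u, ← Real.rpow_mul hW.le]
  have hWs : W ^ s = X ^ u * W ^ δ := by
    rw [hXu, ← Real.rpow_add hW, ← Real.rpow_natCast W s]
    congr 1
    rw [hδ]; ring
  have hM : W ^ δ ≤ Mseq w p := by
    rcases le_or_gt 1 W with h | h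
    · calc W ^ δ ≤ W ^ (1:ℝ) := Real.rpow_le_rpow_of_exponent_le h hδ1
        _ = W := Real.rpow_one W
        _ ≤ Mseq w p := le_max_left _ _
    · calc W ^ δ ≤ W ^ ((1-(p:ℝ))/(p:ℝ)) := Real.rpow_le_rpow_of_exponent_ge hW h.le hδ2
        _ ≤ Mseq w p := le_max_right _ _
  have hXu0 : (0:ℝ) ≤ X ^ u := pow_nonneg (Real.rpow_nonneg hW.le _) u
  have hnum : W ^ s ≤ Mseq w p * X ^ u := by
    rw [hWs, mul_comm (Mseq w p) (X ^ u)]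
    exact mul_le_mul_of_nonneg_left hM hXu0
  have hfac : (Nat.factorial u : ℝ) ≤ (Nat.factorial s : ℝ) := by
    exact_mod_cast Nat.factorial_le hus
  have hfu : (0:ℝ) < (Nat.factorial u : ℝ) := by
    exact_mod_cast Nat.factorial_pos u
  calc W ^ s / (Nat.factorial s : ℝ) ≤ (Mseq w p * X ^ u) / (Nat.factorial u : ℝ) := by
        apply div_le_div₀ (mul_nonneg (le_max_of_le_left hW.le) hXu0) hnum hfu hfac
    _ = Mseq w p * (X ^ u / (Nat.factorial u : ℝ)) := by ring


lemma cS_one (w : ℕ → ℝ) (j : ℕ) : cS w 1 j = w 1 ^ j / (Nat.factorial j : ℝ) := by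
  rw [cS]
  rw [Finset.sum_eq_single j]
  · simp [cS]
  · intro a ha hne
    have ha' : a ≤ j := Nat.lt_succ_iff.mp (Finset.mem_range.mp ha)
    have hne0 : j - 1*a ≠ 0 := by omega
    simp only [cS]
    rw [if_pos (by omega : 1*a ≤ j), if_neg hne0, mul_zero]
  · intro h
    exact absurd (Finset.self_mem_range_succ j) h


lemma cS_le {w : ℕ → ℝ} (h1 : 0 < w 1) :
    ∀ p, 1 ≤ p → (∀ i, i ≤ p → 0 ≤ w i) → ∀ j, cS w p j ≤
      (∏ i ∈ Finset.Icc 1 (p-1), Mseq w i) * (Wseq w p ^ (j/p) / (Nat.factorial (j/p) : ℝ)) := by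
  intro p hp
  induction p, hp using Nat.le_induction with
  | base =>
    intro _ j
    rw [cS_one]
    have : Finset.Icc 1 0 = (∅ : Finset ℕ) := by decide
    simp [this, Wseq, Nat.div_one]
  | succ p hp ih =>
    intro hw j
    have hw' : ∀ i, i ≤ p → 0 ≤ w i := fun i hi => hw i (by omega)
    have hW : 0 < Wseq w p := Wseq_pos h1 p hp hw' 
    set X : ℝ := Wseq w p ^ (((p:ℝ)+1)/(p:ℝ)) with hX
    have hX0 : 0 ≤ X := Real.rpow_nonneg hW.le _
    set t := j / (p+1) with ht
    set PM := ∏ i ∈ Finset.Icc 1 (p-1), Mseq w i with hPM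
    have hPM0 : 0 ≤ PM := prodM_nonneg h1 _ (fun i hi => hw' i (by omega))
    have hM0 : 0 ≤ Mseq w p := Mseq_nonneg h1 hp hw'
    have step1 : cS w (p+1) j ≤ ∑ a ∈ Finset.range (j+1),
        (if (p+1)*a ≤ j then PM * Mseq w p *
          (w (p+1) ^ a * X ^ (t-a) / ((Nat.factorial a : ℝ) * (Nat.factorial (t-a) : ℝ))) else 0) := by
      rw [cS]
      refine Finset.sum_le_sum fun a _ => ?_
      split
      · next hg =>
        have hwa : (0:ℝ) ≤ w (p+1) ^ a / (Nat.factorial a : ℝ) :=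
          div_nonneg (pow_nonneg (hw _ le_rfl) _) (Nat.cast_nonneg _)
        have h2 := ih hw' (j - (p+1)*a)
        have h3 := key_term (w := w) hp hW (j - (p+1)*a)
        have hu : (j - (p+1)*a)/(p+1) = t - a := by
          rw [ht]; exact Nat.sub_mul_div j (p+1) a
        rw [hu] at h3
        calc w (p+1) ^ a / (Nat.factorial a : ℝ) * cS w p (j - (p+1)*a)
            ≤ w (p+1) ^ a / (Nat.factorial a : ℝ) *
              (PM * (Wseq w p ^ ((j - (p+1)*a)/p) / (Nat.factorial ((j - (p+1)*a)/p) : ℝ))) :=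
              mul_le_mul_of_nonneg_left h2 hwa
          _ ≤ w (p+1) ^ a / (Nat.factorial a : ℝ) *
              (PM * (Mseq w p * (X ^ (t-a) / (Nat.factorial (t-a) : ℝ)))) := by
              refine mul_le_mul_of_nonneg_left (mul_le_mul_of_nonneg_left h3 hPM0) hwa
          _ = PM * Mseq w p *
              (w (p+1) ^ a * X ^ (t-a) / ((Nat.factorial a : ℝ) * (Nat.factorial (t-a) : ℝ))) := by
              ring
      · exact le_rfl
    have step2 : ∑ a ∈ Finset.range (j+1),
        (if (p+1)*a ≤ j then PM * Mseq w p *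
          (w (p+1) ^ a * X ^ (t-a) / ((Nat.factorial a : ℝ) * (Nat.factorial (t-a) : ℝ))) else 0)
        = PM * Mseq w p * ((w (p+1) + X) ^ t / (Nat.factorial t : ℝ)) := by
      have hfilter : (Finset.range (j+1)).filter (fun a => (p+1)*a ≤ j) = Finset.range (t+1) := by
        ext a
        simp only [Finset.mem_filter, Finset.mem_range, Nat.lt_succ_iff]
        constructor
        · rintro ⟨_, hg⟩
          rw [ht, Nat.le_div_iff_mul_le (Nat.succ_pos p), Nat.mul_comm]
          exact hg
        · intro hat
          have hg : (p+1)*a ≤ j := by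
            rw [ht, Nat.le_div_iff_mul_le (Nat.succ_pos p), Nat.mul_comm] at hat
            exact hat
          exact ⟨le_trans hat (Nat.div_le_self _ _), hg⟩
      rw [← Finset.sum_filter, hfilter, ← Finset.mul_sum, binom_sum]
    rw [step2] at step1
    have hWp1 : Wseq w (p+1) = w (p+1) + X := by rw [Wseq_succ w hp, hX]
    have hIcc : ∏ i ∈ Finset.Icc 1 ((p+1)-1), Mseq w i = PM * Mseq w p := by
      have h : (p+1) - 1 = (p-1) + 1 := by omega
      rw [h, Finset.prod_Icc_succ_top (by omega), hPM]
      congr 2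
      omega
    calc cS w (p+1) j ≤ PM * Mseq w p * ((w (p+1) + X) ^ t / (Nat.factorial t : ℝ)) := step1
      _ = (∏ i ∈ Finset.Icc 1 ((p+1)-1), Mseq w i) *
          (Wseq w (p+1) ^ (j/(p+1)) / (Nat.factorial (j/(p+1)) : ℝ)) := by
          rw [hIcc, hWp1, ht]


lemma tail_decay {W : ℝ} (hW : 0 ≤ W) {j0 : ℕ} (h2W : 2*W ≤ (j0:ℝ)+1) :
    ∀ t, j0 ≤ t → W^t/(Nat.factorial t : ℝ) ≤ (1/2)^(t - j0) * (W^j0/(Nat.factorial j0 : ℝ)) := by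
  intro t ht
  induction t, ht using Nat.le_induction with
  | base => simp
  | succ t ht ih =>
    have hts : t + 1 - j0 = (t - j0) + 1 := by omega
    have hfac : (Nat.factorial (t+1) : ℝ) = (t+1) * (Nat.factorial t : ℝ) := by
      rw [Nat.factorial_succ]; push_cast; ring
    have ht1 : (0:ℝ) < (t:ℝ)+1 := by positivity
    have hsplit : W^(t+1)/(Nat.factorial (t+1) : ℝ)
        = (W/((t:ℝ)+1)) * (W^t/(Nat.factorial t : ℝ)) := by
      rw [hfac, pow_succ]
      have : (Nat.factorial t : ℝ) ≠ 0 := Nat.cast_ne_zero.mpr (Nat.factorial_ne_zero t)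
      field_simp
    have hhalf : W/((t:ℝ)+1) ≤ 1/2 := by
      rw [div_le_div_iff₀ ht1 (by norm_num)]
      have : (j0:ℝ) ≤ (t:ℝ) := by exact_mod_cast ht
      linarith
    rw [hsplit, hts, pow_succ]
    have h1 : (0:ℝ) ≤ W/((t:ℝ)+1) := by positivity
    have h2 : (0:ℝ) ≤ W^t/(Nat.factorial t : ℝ) := by positivity
    calc (W/((t:ℝ)+1)) * (W^t/(Nat.factorial t : ℝ))
        ≤ (1/2) * ((1/2)^(t-j0) * (W^j0/(Nat.factorial j0 : ℝ))) := by
          apply mul_le_mul hhalf ih h2 (by norm_num)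
      _ = (1/2)^(t-j0) * (1/2) * (W^j0/(Nat.factorial j0 : ℝ)) := by ring

lemma div_group_sum {f : ℕ → ℝ} (hf : ∀ u, 0 ≤ f u) {m : ℕ} (hm : 1 ≤ m) (L : ℕ) :
    ∑ ℓ ∈ range L, f (ℓ/m) ≤ (m:ℝ) * ∑ u ∈ range L, f u := by
  have hmaps : ∀ ℓ ∈ range L, ℓ/m ∈ range L := fun ℓ hℓ =>
    Finset.mem_range.mpr (lt_of_le_of_lt (Nat.div_le_self ℓ m) (Finset.mem_range.mp hℓ))
  rw [← Finset.sum_fiberwise_of_maps_to hmaps]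
  rw [Finset.mul_sum]
  refine Finset.sum_le_sum fun u _ => ?_
  have hconst : ∀ ℓ ∈ (range L).filter (fun ℓ => ℓ/m = u), f (ℓ/m) = f u := by
    intro ℓ hℓ
    rw [(Finset.mem_filter.mp hℓ).2]
  rw [Finset.sum_congr rfl hconst, Finset.sum_const, nsmul_eq_mul]
  have hcard : ((range L).filter (fun ℓ => ℓ/m = u)).card ≤ m := by
    have hsub : (range L).filter (fun ℓ => ℓ/m = u) ⊆ Finset.Ico (m*u) (m*u+m) := by
      intro ℓ hℓ
      have hd := (Finset.mem_filter.mp hℓ).2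
      have e := Nat.div_add_mod ℓ m
      have hr : ℓ % m < m := Nat.mod_lt _ (by omega)
      rw [hd] at e
      rw [Finset.mem_Ico]
      omega
    calc _ ≤ (Finset.Ico (m*u) (m*u+m)).card := Finset.card_le_card hsub
      _ = m := by rw [Nat.card_Ico]; omega
  exact mul_le_mul_of_nonneg_right (by exact_mod_cast hcard) (hf u)


lemma pairsum_le {w : ℕ → ℝ} (h1 : 0 < w 1) {m : ℕ} (hm : 1 ≤ m) (hw : ∀ i, i ≤ m → 0 ≤ w i)
    {k : ℕ} (h2W : 2 * Wseq w m ≤ ((k/m : ℕ) : ℝ) + 1) (L : ℕ) :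
    ∑ ℓ ∈ range L, cS w m (k+ℓ) * cS w m ℓ ≤
      (2*(m:ℝ)*max (Wseq w m) 1 * Real.exp (Wseq w m) * ∏ i ∈ Finset.Icc 1 (m-1), (Mseq w i)^2)
        * (Wseq w m ^ (k/m) / (Nat.factorial (k/m) : ℝ)) := by
  set W := Wseq w m with hWdef
  have hW : 0 < W := Wseq_pos h1 m hm hw
  set PM := ∏ i ∈ Finset.Icc 1 (m-1), Mseq w i with hPM
  have hPM0 : 0 ≤ PM := prodM_nonneg h1 _ (fun i hi => hw i (by omega))
  set j0 := k/m with hj0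
  have hWj : (0:ℝ) ≤ W ^ j0 / (Nat.factorial j0 : ℝ) := by positivity
  have hterm : ∀ ℓ, cS w m (k+ℓ) * cS w m ℓ ≤
      PM^2 * (W ^ j0 / (Nat.factorial j0 : ℝ)) * ((W/2)^(ℓ/m) / (Nat.factorial (ℓ/m) : ℝ)) := by
    intro ℓ
    set A := (k+ℓ)/m with hA
    set u := ℓ/m with hu
    have hAu : j0 + u ≤ A := by
      rw [hA, Nat.le_div_iff_mul_le (by omega : 0 < m), Nat.add_mul]
      have h1' : j0 * m ≤ k := Nat.div_mul_le_self k m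
      have h2' : u * m ≤ ℓ := Nat.div_mul_le_self ℓ m
      omega
    have hb1 : cS w m (k+ℓ) ≤ PM * (W^A / (Nat.factorial A : ℝ)) := cS_le h1 m hm hw (k+ℓ)
    have hb2 : cS w m ℓ ≤ PM * (W^u / (Nat.factorial u : ℝ)) := cS_le h1 m hm hw ℓ
    have htd : W^A/(Nat.factorial A : ℝ) ≤ (1/2)^(A - j0) * (W^j0/(Nat.factorial j0 : ℝ)) :=
      tail_decay hW.le h2W A (le_trans (Nat.le_add_right j0 u) hAu)
    have hpw : ((1:ℝ)/2)^(A - j0) ≤ (1/2)^u :=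
      pow_le_pow_of_le_one (by norm_num) (by norm_num)
        (Nat.le_sub_of_add_le (by rw [Nat.add_comm]; exact hAu))
    have htd2 : W^A/(Nat.factorial A : ℝ) ≤ (1/2)^u * (W^j0/(Nat.factorial j0 : ℝ)) :=
      le_trans htd (mul_le_mul_of_nonneg_right hpw hWj)
    have hc1 : (0:ℝ) ≤ cS w m (k+ℓ) := cS_nonneg m hw _
    have hc2 : (0:ℝ) ≤ cS w m ℓ := cS_nonneg m hw _
    calc cS w m (k+ℓ) * cS w m ℓ
        ≤ (PM * (W^A / (Nat.factorial A : ℝ))) * (PM * (W^u / (Nat.factorial u : ℝ))) := by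
          apply mul_le_mul hb1 hb2 hc2 (by positivity)
      _ ≤ (PM * ((1/2)^u * (W^j0/(Nat.factorial j0 : ℝ)))) * (PM * (W^u / (Nat.factorial u : ℝ))) := by
          apply mul_le_mul_of_nonneg_right (mul_le_mul_of_nonneg_left htd2 hPM0) (by positivity)
      _ = PM^2 * (W ^ j0 / (Nat.factorial j0 : ℝ)) * ((1/2)^u * W^u / (Nat.factorial u : ℝ)) := by
          ring
      _ = PM^2 * (W ^ j0 / (Nat.factorial j0 : ℝ)) * ((W/2)^u / (Nat.factorial u : ℝ)) := by
          rw [div_pow, div_pow, one_pow]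
          ring
  calc ∑ ℓ ∈ range L, cS w m (k+ℓ) * cS w m ℓ
      ≤ ∑ ℓ ∈ range L, PM^2 * (W ^ j0 / (Nat.factorial j0 : ℝ)) *
          ((W/2)^(ℓ/m) / (Nat.factorial (ℓ/m) : ℝ)) := Finset.sum_le_sum fun ℓ _ => hterm ℓ
    _ = PM^2 * (W ^ j0 / (Nat.factorial j0 : ℝ)) *
          ∑ ℓ ∈ range L, ((W/2)^(ℓ/m) / (Nat.factorial (ℓ/m) : ℝ)) := by rw [← Finset.mul_sum]
    _ ≤ PM^2 * (W ^ j0 / (Nat.factorial j0 : ℝ)) *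
          ((m:ℝ) * ∑ u ∈ range L, ((W/2)^u / (Nat.factorial u : ℝ))) := by
        refine mul_le_mul_of_nonneg_left ?_ (by positivity)
        exact div_group_sum (f := fun u => (W/2)^u / (Nat.factorial u : ℝ))
          (fun u => by positivity) hm L
    _ ≤ PM^2 * (W ^ j0 / (Nat.factorial j0 : ℝ)) * ((m:ℝ) * Real.exp (W/2)) := by
        apply mul_le_mul_of_nonneg_left (mul_le_mul_of_nonneg_left
          (Real.sum_le_exp_of_nonneg (by positivity) L) (by positivity)) (by positivity)
    _ ≤ (2*(m:ℝ)*max W 1 * Real.exp W * PM^2) * (W ^ j0 / (Nat.factorial j0 : ℝ)) := by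
        have hexp : Real.exp (W/2) ≤ Real.exp W := Real.exp_le_exp.mpr (by linarith)
        have hmax : (1:ℝ) ≤ max W 1 := le_max_right _ _
        have hstep : (m:ℝ) * Real.exp (W/2) ≤ 2*(m:ℝ)*max W 1 * Real.exp W := by
          have ha : (m:ℝ) * Real.exp (W/2) ≤ (m:ℝ) * Real.exp W :=
            mul_le_mul_of_nonneg_left hexp (by positivity)
          have hb : (m:ℝ) * Real.exp W ≤ (2*max W 1) * ((m:ℝ) * Real.exp W) := by
            nlinarith [Real.exp_pos W, (by positivity : (0:ℝ) ≤ (m:ℝ) * Real.exp W)]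
          calc (m:ℝ) * Real.exp (W/2) ≤ (m:ℝ) * Real.exp W := ha
            _ ≤ (2*max W 1) * ((m:ℝ) * Real.exp W) := hb
            _ = 2*(m:ℝ)*max W 1 * Real.exp W := by ring
        calc PM^2 * (W ^ j0 / (Nat.factorial j0 : ℝ)) * ((m:ℝ) * Real.exp (W/2))
            ≤ PM^2 * (W ^ j0 / (Nat.factorial j0 : ℝ)) * (2*(m:ℝ)*max W 1 * Real.exp W) :=
              mul_le_mul_of_nonneg_left hstep (by positivity)
          _ = (2*(m:ℝ)*max W 1 * Real.exp W * PM^2) * (W ^ j0 / (Nat.factorial j0 : ℝ)) := by ring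
    _ = (2*(m:ℝ)*max W 1 * Real.exp W * ∏ i ∈ Finset.Icc 1 (m-1), (Mseq w i)^2)
          * (W ^ j0 / (Nat.factorial j0 : ℝ)) := by
        rw [hPM, ← Finset.prod_pow]


/-- weighted size of a vector of subsets -/
def NS {n : ℕ} {p : ℕ} (E : Fin p → Finset (Fin n)) : ℕ := ∑ i : Fin p, ((i:ℕ)+1) * (E i).card

/-- sum over vectors of subsets with prescribed weighted size -/
def SetSum (n : ℕ) (ω : ℕ → ℝ) (p j : ℕ) : ℝ :=
  ∑ E ∈ Fintype.piFinset (fun _ : Fin p => (Finset.univ : Finset (Fin n)).powerset),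
    if NS E = j then ∏ i : Fin p, ω ((i:ℕ)+1) ^ (E i).card else 0

lemma sum_snoc {γ : Type*} [DecidableEq γ] (p : ℕ) (T : Finset γ)
    (f : (Fin (p+1) → γ) → ℝ) :
    ∑ E ∈ Fintype.piFinset (fun _ : Fin (p+1) => T), f E
      = ∑ e ∈ T, ∑ E ∈ Fintype.piFinset (fun _ : Fin p => T), f (Fin.snoc E e) := by
  have h : ∑ E ∈ Fintype.piFinset (fun _ : Fin (p+1) => T), f E
      = ∑ x ∈ T ×ˢ Fintype.piFinset (fun _ : Fin p => T), f (Fin.snoc x.2 x.1) := by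
    apply Finset.sum_nbij' (i := fun E => ((E (Fin.last p) : γ), Fin.init E))
      (j := fun x => Fin.snoc x.2 x.1)
    · intro E hE
      rw [Finset.mem_product]
      rw [Fintype.mem_piFinset] at hE
      refine ⟨hE _, ?_⟩
      rw [Fintype.mem_piFinset]
      intro i
      exact hE _
    · intro x hx
      rw [Finset.mem_product] at hx
      rw [Fintype.mem_piFinset]
      intro i
      refine Fin.lastCases ?_ ?_ i
      · rw [Fin.snoc_last]; exact hx.1
      · intro j
        rw [Fin.snoc_castSucc]
        exact Fintype.mem_piFinset.mp hx.2 j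
    · intro E _
      exact Fin.snoc_init_self E
    · intro x _
      ext
      · rw [Fin.snoc_last]
      · simp [Fin.init_snoc]
    · intro E _
      rw [Fin.snoc_init_self E]
  rw [h, Finset.sum_product]


lemma SetSum_nonneg {n : ℕ} {ω : ℕ → ℝ} {p j : ℕ} (hω : ∀ i, 1 ≤ i → i ≤ p → 0 ≤ ω i) :
    0 ≤ SetSum n ω p j := by
  refine Finset.sum_nonneg fun E _ => ?_
  split
  · refine Finset.prod_nonneg fun i _ => ?_
    exact pow_nonneg (hω _ (by omega) (by omega : (i:ℕ)+1 ≤ p)) _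
  · exact le_rfl

lemma choose_le_pow_div (n a : ℕ) (hn : 1 ≤ n) :
    (n.choose a : ℝ) * ((1:ℝ)/(n:ℝ))^a ≤ 1 / (Nat.factorial a : ℝ) := by
  have hd : (n.choose a : ℝ) * (Nat.factorial a : ℝ) ≤ (n:ℝ)^a := by
    have h1 : n.choose a * Nat.factorial a ≤ n^a := by
      rw [Nat.mul_comm, ← Nat.descFactorial_eq_factorial_mul_choose]
      exact Nat.descFactorial_le_pow n a
    exact_mod_cast h1
  have hn0 : (0:ℝ) < (n:ℝ) := by exact_mod_cast hn
  have ha0 : (0:ℝ) < (Nat.factorial a : ℝ) := by exact_mod_cast Nat.factorial_pos a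
  rw [div_pow, one_pow, mul_one_div, div_le_div_iff₀ (by positivity) ha0]
  linarith [hd]

lemma SetSum_le_cS {n : ℕ} (hn : 1 ≤ n) {w : ℕ → ℝ} :
    ∀ p, (∀ i, i ≤ p → 0 ≤ w i) → ∀ j,
      SetSum n (fun i => w i / (n:ℝ)) p j ≤ cS w p j := by
  intro p
  induction p with
  | zero =>
    intro _ j
    rw [SetSum, cS]
    have h1 : ∀ E ∈ Fintype.piFinset (fun _ : Fin 0 => (Finset.univ : Finset (Fin n)).powerset),
        (if NS E = j then ∏ i : Fin 0, (w ((i:ℕ)+1) / (n:ℝ)) ^ (E i).card else 0)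
          = if j = 0 then (1:ℝ) else 0 := by
      intro E _
      have : NS E = 0 := by simp [NS]
      rw [this]
      simp [eq_comm]
    rw [Finset.sum_congr rfl h1, Finset.sum_const]
    have hcard : (Fintype.piFinset (fun _ : Fin 0 => (Finset.univ : Finset (Fin n)).powerset)).card = 1 := by
      rw [Fintype.card_piFinset]
      simp
    rw [hcard, one_smul]
  | succ p ih =>
    intro hw j
    have hw' : ∀ i, i ≤ p → 0 ≤ w i := fun i hi => hw i (le_trans hi (Nat.le_succ p))
    have hωp : ∀ i, 1 ≤ i → i ≤ p → 0 ≤ w i / (n:ℝ) :=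
      fun i _ hi => div_nonneg (hw' i hi) (Nat.cast_nonneg n)
    rw [SetSum, sum_snoc]
    have hNS : ∀ (E : Fin p → Finset (Fin n)) (e : Finset (Fin n)),
        NS (Fin.snoc E e : Fin (p+1) → Finset (Fin n)) = NS E + (p+1)*e.card := by
      intro E e
      rw [NS, NS, Fin.sum_univ_castSucc]
      congr 1
      · refine Finset.sum_congr rfl fun i _ => ?_
        rw [Fin.snoc_castSucc]
        simp
      · rw [Fin.snoc_last, Fin.val_last]
    have hprod : ∀ (E : Fin p → Finset (Fin n)) (e : Finset (Fin n)),
        (∏ i : Fin (p+1), (w ((i:ℕ)+1) / (n:ℝ)) ^ ((Fin.snoc E e : Fin (p+1) → Finset (Fin n)) i).card)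
          = (∏ i : Fin p, (w ((i:ℕ)+1) / (n:ℝ)) ^ (E i).card) * (w (p+1) / (n:ℝ)) ^ e.card := by
      intro E e
      rw [Fin.prod_univ_castSucc]
      congr 1
      · refine Finset.prod_congr rfl fun i _ => ?_
        rw [Fin.snoc_castSucc]
        simp
      · rw [Fin.snoc_last, Fin.val_last]
    have hinner : ∀ e ∈ (Finset.univ : Finset (Fin n)).powerset,
        (∑ E ∈ Fintype.piFinset (fun _ : Fin p => (Finset.univ : Finset (Fin n)).powerset),
          if NS (Fin.snoc E e : Fin (p+1) → Finset (Fin n)) = j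
          then ∏ i : Fin (p+1), (w ((i:ℕ)+1) / (n:ℝ)) ^ ((Fin.snoc E e : Fin (p+1) → Finset (Fin n)) i).card
          else 0)
        = (if (p+1)*e.card ≤ j
            then (w (p+1) / (n:ℝ)) ^ e.card * SetSum n (fun i => w i / (n:ℝ)) p (j - (p+1)*e.card)
            else 0) := by
      intro e _
      by_cases hc : (p+1)*e.card ≤ j
      · rw [if_pos hc, SetSum, Finset.mul_sum]
        refine Finset.sum_congr rfl fun E _ => ?_
        rw [hNS, hprod]
        by_cases hE : NS E = j - (p+1)*e.card
        · rw [if_pos (by omega), if_pos hE]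
          ring
        · rw [if_neg (by omega), if_neg hE, mul_zero]
      · rw [if_neg hc]
        refine Finset.sum_eq_zero fun E _ => ?_
        rw [hNS]
        rw [if_neg (by omega)]
    rw [Finset.sum_congr rfl hinner]
    -- group by cardinality
    have hmaps : ∀ e ∈ (Finset.univ : Finset (Fin n)).powerset, e.card ∈ Finset.range (n+1) := by
      intro e he
      rw [Finset.mem_range, Nat.lt_succ_iff]
      calc e.card ≤ (Finset.univ : Finset (Fin n)).card :=
            Finset.card_le_card (Finset.mem_powerset.mp he)
        _ = n := by simp
    rw [← Finset.sum_fiberwise_of_maps_to hmaps]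
    have hfiber : ∀ a ∈ Finset.range (n+1),
        (∑ e ∈ ((Finset.univ : Finset (Fin n)).powerset).filter (fun e => e.card = a),
          (if (p+1)*e.card ≤ j
            then (w (p+1) / (n:ℝ)) ^ e.card * SetSum n (fun i => w i / (n:ℝ)) p (j - (p+1)*e.card)
            else 0))
        = (n.choose a : ℝ) * (if (p+1)*a ≤ j
            then (w (p+1) / (n:ℝ)) ^ a * SetSum n (fun i => w i / (n:ℝ)) p (j - (p+1)*a)
            else 0) := by
      intro a _
      have hcongr : ∀ e ∈ ((Finset.univ : Finset (Fin n)).powerset).filter (fun e => e.card = a),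
          (if (p+1)*e.card ≤ j
            then (w (p+1) / (n:ℝ)) ^ e.card * SetSum n (fun i => w i / (n:ℝ)) p (j - (p+1)*e.card)
            else 0)
          = (if (p+1)*a ≤ j
            then (w (p+1) / (n:ℝ)) ^ a * SetSum n (fun i => w i / (n:ℝ)) p (j - (p+1)*a)
            else 0) := by
        intro e he
        rw [(Finset.mem_filter.mp he).2]
      rw [Finset.sum_congr rfl hcongr, Finset.sum_const, nsmul_eq_mul]
      congr 2
      rw [← Finset.powersetCard_eq_filter, Finset.card_powersetCard]
      simp
    rw [Finset.sum_congr rfl hfiber]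
    -- extend range and compare with cS
    set h' : ℕ → ℝ := fun a =>
      if (p+1)*a ≤ j then w (p+1) ^ a / (Nat.factorial a : ℝ) * cS w p (j - (p+1)*a) else 0
      with hh'
    have hext1 : ∑ a ∈ Finset.range (n+1), (n.choose a : ℝ) * (if (p+1)*a ≤ j
            then (w (p+1) / (n:ℝ)) ^ a * SetSum n (fun i => w i / (n:ℝ)) p (j - (p+1)*a) else 0)
        = ∑ a ∈ Finset.range (n+1+j), (n.choose a : ℝ) * (if (p+1)*a ≤ j
            then (w (p+1) / (n:ℝ)) ^ a * SetSum n (fun i => w i / (n:ℝ)) p (j - (p+1)*a) else 0) := by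
      apply Finset.sum_subset
      · apply Finset.range_subset_range.mpr; omega
      · intro a _ ha
        have : n < a := by
          rw [Finset.mem_range, Nat.lt_succ_iff] at ha
          omega
        rw [Nat.choose_eq_zero_of_lt this]
        simp
    have hterm : ∀ a ∈ Finset.range (n+1+j),
        (n.choose a : ℝ) * (if (p+1)*a ≤ j
            then (w (p+1) / (n:ℝ)) ^ a * SetSum n (fun i => w i / (n:ℝ)) p (j - (p+1)*a) else 0)
        ≤ h' a := by
      intro a _
      simp only [hh']
      by_cases hc : (p+1)*a ≤ j
      · rw [if_pos hc, if_pos hc]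
        have hS0 : 0 ≤ SetSum n (fun i => w i / (n:ℝ)) p (j - (p+1)*a) := SetSum_nonneg hωp
        have hcS := ih hw' (j - (p+1)*a)
        have hn0 : (0:ℝ) < (n:ℝ) := by exact_mod_cast hn
        have hfac0 : (0:ℝ) < (Nat.factorial a : ℝ) := by exact_mod_cast Nat.factorial_pos a
        have hkey : (n.choose a : ℝ) * (w (p+1) / (n:ℝ)) ^ a ≤ w (p+1) ^ a / (Nat.factorial a : ℝ) := by
          have hb := choose_le_pow_div n a hn
          have hwp : 0 ≤ w (p+1) := hw (p+1) le_rfl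
          calc (n.choose a : ℝ) * (w (p+1) / (n:ℝ)) ^ a
              = ((n.choose a : ℝ) * ((1:ℝ)/(n:ℝ))^a) * w (p+1) ^ a := by
                rw [div_pow, div_pow, one_pow]; ring
            _ ≤ (1 / (Nat.factorial a : ℝ)) * w (p+1) ^ a :=
                mul_le_mul_of_nonneg_right hb (pow_nonneg hwp a)
            _ = w (p+1) ^ a / (Nat.factorial a : ℝ) := by ring
        calc (n.choose a : ℝ) * ((w (p+1) / (n:ℝ)) ^ a * SetSum n (fun i => w i / (n:ℝ)) p (j - (p+1)*a))
            = ((n.choose a : ℝ) * (w (p+1) / (n:ℝ)) ^ a) * SetSum n (fun i => w i / (n:ℝ)) p (j - (p+1)*a) := by ring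
          _ ≤ (w (p+1) ^ a / (Nat.factorial a : ℝ)) * cS w p (j - (p+1)*a) := by
              exact mul_le_mul hkey hcS hS0
                (div_nonneg (pow_nonneg (hw (p+1) le_rfl) a) (Nat.cast_nonneg _))
      · rw [if_neg hc, if_neg hc, mul_zero]
    have hext2 : ∑ a ∈ Finset.range (n+1+j), h' a = ∑ a ∈ Finset.range (j+1), h' a := by
      symm
      apply Finset.sum_subset
      · apply Finset.range_subset_range.mpr; omega
      · intro a _ ha
        rw [Finset.mem_range, Nat.lt_succ_iff] at ha
        simp only [hh']
        have : ¬ (p+1)*a ≤ j := by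
          push_neg at ha ⊢
          calc j < a := ha
            _ ≤ (p+1)*a := Nat.le_mul_of_pos_left a (Nat.succ_pos p)
        rw [if_neg this]
    calc ∑ a ∈ Finset.range (n+1), (n.choose a : ℝ) * (if (p+1)*a ≤ j
            then (w (p+1) / (n:ℝ)) ^ a * SetSum n (fun i => w i / (n:ℝ)) p (j - (p+1)*a) else 0)
        = ∑ a ∈ Finset.range (n+1+j), (n.choose a : ℝ) * (if (p+1)*a ≤ j
            then (w (p+1) / (n:ℝ)) ^ a * SetSum n (fun i => w i / (n:ℝ)) p (j - (p+1)*a) else 0) := hext1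
      _ ≤ ∑ a ∈ Finset.range (n+1+j), h' a := Finset.sum_le_sum hterm
      _ = ∑ a ∈ Finset.range (j+1), h' a := hext2
      _ = cS w (p+1) j := by rw [cS]


/-- pointwise level identity -/
lemma point_level {m : ℕ} (v : ℤ) (h1 : -(m:ℤ) ≤ v) (h2 : v ≤ (m:ℤ)) :
    v = (∑ i : Fin m, (((i:ℕ):ℤ)+1) * (if v = ((i:ℕ):ℤ)+1 then 1 else 0))
      - (∑ i : Fin m, (((i:ℕ):ℤ)+1) * (if v = -(((i:ℕ):ℤ)+1) then 1 else 0)) := by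
  rcases lt_trichotomy v 0 with hneg | hzero | hpos
  · have ha : (-v-1).toNat < m := by omega
    have hs1 : (∑ i : Fin m, (((i:ℕ):ℤ)+1) * (if v = ((i:ℕ):ℤ)+1 then 1 else 0)) = 0 := by
      refine Finset.sum_eq_zero fun i _ => ?_
      rw [if_neg (by omega), mul_zero]
    have hs2 : (∑ i : Fin m, (((i:ℕ):ℤ)+1) * (if v = -(((i:ℕ):ℤ)+1) then 1 else 0)) = -v := by
      rw [Finset.sum_eq_single (⟨(-v-1).toNat, ha⟩ : Fin m)]
      · rw [if_pos]
        · show (((-v-1).toNat : ℤ)+1) * 1 = -v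
          omega
        · show v = -(((-v-1).toNat : ℤ)+1)
          omega
      · intro i _ hne
        rw [if_neg, mul_zero]
        intro hcon
        apply hne
        apply Fin.ext
        show (i:ℕ) = (-v-1).toNat
        omega
      · intro h
        exact absurd (Finset.mem_univ _) h
    rw [hs1, hs2]
    ring
  · subst hzero
    have hs1 : (∑ i : Fin m, (((i:ℕ):ℤ)+1) * (if (0:ℤ) = ((i:ℕ):ℤ)+1 then 1 else 0)) = 0 := by
      refine Finset.sum_eq_zero fun i _ => ?_
      rw [if_neg (by omega), mul_zero]
    have hs2 : (∑ i : Fin m, (((i:ℕ):ℤ)+1) * (if (0:ℤ) = -(((i:ℕ):ℤ)+1) then 1 else 0)) = 0 := by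
      refine Finset.sum_eq_zero fun i _ => ?_
      rw [if_neg (by omega), mul_zero]
    rw [hs1, hs2]
    ring
  · have ha : (v-1).toNat < m := by omega
    have hs1 : (∑ i : Fin m, (((i:ℕ):ℤ)+1) * (if v = ((i:ℕ):ℤ)+1 then 1 else 0)) = v := by
      rw [Finset.sum_eq_single (⟨(v-1).toNat, ha⟩ : Fin m)]
      · rw [if_pos]
        · show (((v-1).toNat : ℤ)+1) * 1 = v
          omega
        · show v = (((v-1).toNat : ℤ)+1)
          omega
      · intro i _ hne
        rw [if_neg, mul_zero]
        intro hcon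
        apply hne
        apply Fin.ext
        show (i:ℕ) = (v-1).toNat
        omega
      · intro h
        exact absurd (Finset.mem_univ _) h
    have hs2 : (∑ i : Fin m, (((i:ℕ):ℤ)+1) * (if v = -(((i:ℕ):ℤ)+1) then 1 else 0)) = 0 := by
      refine Finset.sum_eq_zero fun i _ => ?_
      rw [if_neg (by omega), mul_zero]
    rw [hs1, hs2]
    ring

/-- pointwise weight inequality -/
lemma point_weight {n m : ℕ} (hn : 1 ≤ n) (q : ℤ → ℝ) (w : ℕ → ℝ)
    (hwf : ∀ i : ℕ, w i = (n:ℝ) * max (q (i:ℤ)) (q (-(i:ℤ))))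
    (hq01 : q 0 ≤ 1)
    (v : ℤ) (h1 : -(m:ℤ) ≤ v) (h2 : v ≤ (m:ℤ)) :
    (if v = 0 then q 0 else max (q v) (q (-v))) ≤
      (∏ i : Fin m, (if v = ((i:ℕ):ℤ)+1 then w ((i:ℕ)+1)/(n:ℝ) else 1))
      * (∏ i : Fin m, (if v = -(((i:ℕ):ℤ)+1) then w ((i:ℕ)+1)/(n:ℝ) else 1)) := by
  have hn0 : (0:ℝ) < (n:ℝ) := by exact_mod_cast hn
  rcases lt_trichotomy v 0 with hneg | hzero | hpos
  · have ha : (-v-1).toNat < m := by omega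
    have hp1 : (∏ i : Fin m, (if v = ((i:ℕ):ℤ)+1 then w ((i:ℕ)+1)/(n:ℝ) else 1)) = 1 := by
      refine Finset.prod_eq_one fun i _ => if_neg (by omega)
    have hp2 : (∏ i : Fin m, (if v = -(((i:ℕ):ℤ)+1) then w ((i:ℕ)+1)/(n:ℝ) else 1))
        = w ((-v-1).toNat+1)/(n:ℝ) := by
      rw [Finset.prod_eq_single (⟨(-v-1).toNat, ha⟩ : Fin m)]
      · rw [if_pos]
        show v = -(((-v-1).toNat : ℤ)+1)
        omega
      · intro i _ hne
        refine if_neg fun hcon => hne (Fin.ext ?_)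
        show (i:ℕ) = (-v-1).toNat
        omega
      · intro h
        exact absurd (Finset.mem_univ _) h
    rw [hp1, hp2, if_neg (by omega), one_mul]
    rw [hwf ((-v-1).toNat+1)]
    have hv1 : (((-v-1).toNat+1 : ℕ) : ℤ) = -v := by omega
    rw [hv1]
    have hv2 : -(-v) = v := by ring
    rw [hv2]
    have hcan : (n:ℝ) * (q (-v) ⊔ q v) / (n:ℝ) = q (-v) ⊔ q v := by field_simp
    rw [hcan, max_comm]
  · subst hzero
    have hp1 : (∏ i : Fin m, (if (0:ℤ) = ((i:ℕ):ℤ)+1 then w ((i:ℕ)+1)/(n:ℝ) else 1)) = 1 :=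
      Finset.prod_eq_one fun i _ => if_neg (by omega)
    have hp2 : (∏ i : Fin m, (if (0:ℤ) = -(((i:ℕ):ℤ)+1) then w ((i:ℕ)+1)/(n:ℝ) else 1)) = 1 :=
      Finset.prod_eq_one fun i _ => if_neg (by omega)
    rw [hp1, hp2, if_pos rfl, one_mul]
    exact hq01
  · have ha : (v-1).toNat < m := by omega
    have hp1 : (∏ i : Fin m, (if v = ((i:ℕ):ℤ)+1 then w ((i:ℕ)+1)/(n:ℝ) else 1))
        = w ((v-1).toNat+1)/(n:ℝ) := by
      rw [Finset.prod_eq_single (⟨(v-1).toNat, ha⟩ : Fin m)]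
      · rw [if_pos]
        show v = (((v-1).toNat : ℤ)+1)
        omega
      · intro i _ hne
        refine if_neg fun hcon => hne (Fin.ext ?_)
        show (i:ℕ) = (v-1).toNat
        omega
      · intro h
        exact absurd (Finset.mem_univ _) h
    have hp2 : (∏ i : Fin m, (if v = -(((i:ℕ):ℤ)+1) then w ((i:ℕ)+1)/(n:ℝ) else 1)) = 1 :=
      Finset.prod_eq_one fun i _ => if_neg (by omega)
    rw [hp1, hp2, if_neg (by omega), mul_one]
    rw [hwf ((v-1).toNat+1)]
    have hv1 : (((v-1).toNat+1 : ℕ) : ℤ) = v := by omega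
    rw [hv1]
    have hcan : (n:ℝ) * (q v ⊔ q (-v)) / (n:ℝ) = q v ⊔ q (-v) := by field_simp
    rw [hcan]


lemma levelAt_top {n : ℕ} (s : Fin n → ℤ) : levelAt n s n = ∑ t, s t := by
  rw [levelAt]
  congr 1
  exact Finset.filter_true_of_mem fun i _ => i.isLt

/-- counting form of the level -/
lemma level_count {n m : ℕ} (s : Fin n → ℤ) (hs : ∀ t, s t ∈ Finset.Icc (-(m:ℤ)) (m:ℤ)) :
    (∑ t, s t)
      = (∑ i : Fin m, (((i:ℕ):ℤ)+1) * ((Finset.univ.filter (fun t => s t = ((i:ℕ):ℤ)+1)).card : ℤ))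
        - ∑ i : Fin m, (((i:ℕ):ℤ)+1) * ((Finset.univ.filter (fun t => s t = -(((i:ℕ):ℤ)+1))).card : ℤ) := by
  have hpt : ∀ t : Fin n, s t
      = (∑ i : Fin m, (((i:ℕ):ℤ)+1) * (if s t = ((i:ℕ):ℤ)+1 then 1 else 0))
        - (∑ i : Fin m, (((i:ℕ):ℤ)+1) * (if s t = -(((i:ℕ):ℤ)+1) then 1 else 0)) := by
    intro t
    have := hs t
    rw [Finset.mem_Icc] at this
    exact point_level (s t) this.1 this.2
  rw [Finset.sum_congr rfl (fun t _ => hpt t), Finset.sum_sub_distrib]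
  congr 1
  · rw [Finset.sum_comm]
    refine Finset.sum_congr rfl fun i _ => ?_
    rw [← Finset.mul_sum, Finset.sum_boole]
  · rw [Finset.sum_comm]
    refine Finset.sum_congr rfl fun i _ => ?_
    rw [← Finset.mul_sum, Finset.sum_boole]

/-- weight bound in terms of fiber cardinalities -/
lemma modWeight_le {n m : ℕ} (hn : 1 ≤ n) (q : ℤ → ℝ) (w : ℕ → ℝ)
    (hwf : ∀ i : ℕ, w i = (n:ℝ) * max (q (i:ℤ)) (q (-(i:ℤ))))
    (hq00 : 0 ≤ q 0) (hq01 : q 0 ≤ 1)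
    (hqm : ∀ v : ℤ, -(m:ℤ) ≤ v → v ≤ (m:ℤ) → 0 ≤ max (q v) (q (-v)))
    (s : Fin n → ℤ) (hs : ∀ t, s t ∈ Finset.Icc (-(m:ℤ)) (m:ℤ)) :
    modWeight n q s ≤
      (∏ i : Fin m, (w ((i:ℕ)+1)/(n:ℝ)) ^ (Finset.univ.filter (fun t => s t = ((i:ℕ):ℤ)+1)).card)
      * ∏ i : Fin m, (w ((i:ℕ)+1)/(n:ℝ)) ^ (Finset.univ.filter (fun t => s t = -(((i:ℕ):ℤ)+1))).card := by
  have step1 : modWeight n q s ≤ ∏ t : Fin n,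
      ((∏ i : Fin m, (if s t = ((i:ℕ):ℤ)+1 then w ((i:ℕ)+1)/(n:ℝ) else 1))
        * (∏ i : Fin m, (if s t = -(((i:ℕ):ℤ)+1) then w ((i:ℕ)+1)/(n:ℝ) else 1))) := by
    rw [modWeight]
    apply Finset.prod_le_prod
    · intro t _
      split
      · exact hq00
      · have := hs t
        rw [Finset.mem_Icc] at this
        exact hqm _ this.1 this.2
    · intro t _
      have := hs t
      rw [Finset.mem_Icc] at this
      exact point_weight hn q w hwf hq01 (s t) this.1 this.2
  calc modWeight n q s ≤ _ := step1
    _ = (∏ t : Fin n, ∏ i : Fin m, (if s t = ((i:ℕ):ℤ)+1 then w ((i:ℕ)+1)/(n:ℝ) else 1))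
        * (∏ t : Fin n, ∏ i : Fin m, (if s t = -(((i:ℕ):ℤ)+1) then w ((i:ℕ)+1)/(n:ℝ) else 1)) :=
      Finset.prod_mul_distrib
    _ = (∏ i : Fin m, (w ((i:ℕ)+1)/(n:ℝ)) ^ (Finset.univ.filter (fun t => s t = ((i:ℕ):ℤ)+1)).card)
      * ∏ i : Fin m, (w ((i:ℕ)+1)/(n:ℝ)) ^ (Finset.univ.filter (fun t => s t = -(((i:ℕ):ℤ)+1))).card := by
      congr 1
      · rw [Finset.prod_comm]
        refine Finset.prod_congr rfl fun i _ => ?_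
        rw [← Finset.prod_filter, Finset.prod_const]
      · rw [Finset.prod_comm]
        refine Finset.prod_congr rfl fun i _ => ?_
        rw [← Finset.prod_filter, Finset.prod_const]


/-- recovering the path from its fibers -/
lemma fib_inj {n m : ℕ} (s s' : Fin n → ℤ)
    (hs : ∀ t, s t ∈ Finset.Icc (-(m:ℤ)) (m:ℤ)) (hs' : ∀ t, s' t ∈ Finset.Icc (-(m:ℤ)) (m:ℤ))
    (hpos : ∀ i : Fin m, Finset.univ.filter (fun t => s t = ((i:ℕ):ℤ)+1)
      = Finset.univ.filter (fun t => s' t = ((i:ℕ):ℤ)+1))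
    (hneg : ∀ i : Fin m, Finset.univ.filter (fun t => s t = -(((i:ℕ):ℤ)+1))
      = Finset.univ.filter (fun t => s' t = -(((i:ℕ):ℤ)+1))) : s = s' := by
  funext t
  have hb := Finset.mem_Icc.mp (hs t)
  have hb' := Finset.mem_Icc.mp (hs' t)
  rcases lt_trichotomy (s t) 0 with hcase | hcase | hcase
  · have ha : (-(s t)-1).toNat < m := by omega
    have hmem : t ∈ Finset.univ.filter (fun t' => s t' = -((((⟨(-(s t)-1).toNat, ha⟩ : Fin m) :ℕ):ℤ)+1)) := by
      rw [Finset.mem_filter]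
      refine ⟨Finset.mem_univ t, ?_⟩
      show s t = -(((-(s t)-1).toNat : ℤ)+1)
      omega
    rw [hneg] at hmem
    have := (Finset.mem_filter.mp hmem).2
    rw [this]
    show s t = -(((-(s t)-1).toNat : ℤ)+1)
    omega
  · rcases lt_trichotomy (s' t) 0 with hcase' | hcase' | hcase'
    · have ha : (-(s' t)-1).toNat < m := by omega
      have hmem : t ∈ Finset.univ.filter (fun t' => s' t' = -((((⟨(-(s' t)-1).toNat, ha⟩ : Fin m) :ℕ):ℤ)+1)) := by
        rw [Finset.mem_filter]
        refine ⟨Finset.mem_univ t, ?_⟩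
        show s' t = -(((-(s' t)-1).toNat : ℤ)+1)
        omega
      rw [← hneg] at hmem
      have := (Finset.mem_filter.mp hmem).2
      omega
    · omega
    · have ha : ((s' t)-1).toNat < m := by omega
      have hmem : t ∈ Finset.univ.filter (fun t' => s' t' = ((((⟨((s' t)-1).toNat, ha⟩ : Fin m) :ℕ):ℤ)+1)) := by
        rw [Finset.mem_filter]
        refine ⟨Finset.mem_univ t, ?_⟩
        show s' t = (((s' t)-1).toNat : ℤ)+1
        omega
      rw [← hpos] at hmem
      have := (Finset.mem_filter.mp hmem).2
      omega
  · have ha : ((s t)-1).toNat < m := by omega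
    have hmem : t ∈ Finset.univ.filter (fun t' => s t' = ((((⟨((s t)-1).toNat, ha⟩ : Fin m) :ℕ):ℤ)+1)) := by
      rw [Finset.mem_filter]
      refine ⟨Finset.mem_univ t, ?_⟩
      show s t = (((s t)-1).toNat : ℤ)+1
      omega
    rw [hpos] at hmem
    have := (Finset.mem_filter.mp hmem).2
    rw [this]
    show s t = (((s t)-1).toNat : ℤ)+1
    omega


lemma qtilde_le_pairsum {n m : ℕ} (hn : 1 ≤ n) (hm : 1 ≤ m) (q : ℤ → ℝ) (w : ℕ → ℝ)
    (hq : ∀ l : ℤ, -(m : ℤ) ≤ l → l ≤ (m : ℤ) → 0 ≤ q l)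
    (hq01 : q 0 ≤ 1)
    (hwf : ∀ i : ℕ, w i = (n:ℝ) * max (q (i:ℤ)) (q (-(i:ℤ)))) (k : ℕ) :
    qtilde n m q (k:ℤ) ≤ ∑ ℓ ∈ Finset.range (m*m*n+1), cS w m (k+ℓ) * cS w m ℓ := by
  have hq00 : 0 ≤ q 0 := hq 0 (neg_nonpos_of_nonneg (Int.natCast_nonneg m)) (Int.natCast_nonneg m)
  have hqm : ∀ v : ℤ, -(m:ℤ) ≤ v → v ≤ (m:ℤ) → 0 ≤ max (q v) (q (-v)) := by
    intro v h1 h2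
    exact le_trans (hq v h1 h2) (le_max_left _ _)
  have hwnn : ∀ i, i ≤ m → 0 ≤ w i := by
    intro i hi
    rw [hwf i]
    refine mul_nonneg (Nat.cast_nonneg n) ?_
    refine le_trans (hq (i:ℤ) ?_ ?_) (le_max_left _ _)
    · omega
    · omega
  have hωnn : ∀ i, 1 ≤ i → i ≤ m → 0 ≤ w i / (n:ℝ) :=
    fun i _ hi => div_nonneg (hwnn i hi) (Nat.cast_nonneg n)
  set S := (paths n m).filter (fun s => levelAt n s n = (k:ℤ)) with hS
  have hpaths_mem : ∀ s ∈ S, ∀ t, s t ∈ Finset.Icc (-(m:ℤ)) (m:ℤ) := by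
    intro s hsS t
    have := (Finset.mem_filter.mp hsS).1
    rw [paths, Fintype.mem_piFinset] at this
    exact this t
  set Φ : (Fin n → ℤ) → ((Fin m → Finset (Fin n)) × (Fin m → Finset (Fin n))) :=
    fun s => (fun i => Finset.univ.filter (fun t => s t = ((i:ℕ):ℤ)+1),
              fun i => Finset.univ.filter (fun t => s t = -(((i:ℕ):ℤ)+1))) with hΦ
  set g : ((Fin m → Finset (Fin n)) × (Fin m → Finset (Fin n))) → ℝ :=
    fun F => (∏ i : Fin m, (w ((i:ℕ)+1)/(n:ℝ)) ^ (F.1 i).card)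
      * (∏ i : Fin m, (w ((i:ℕ)+1)/(n:ℝ)) ^ (F.2 i).card) with hg
  have hg0 : ∀ F, 0 ≤ g F := by
    intro F
    refine mul_nonneg (Finset.prod_nonneg fun i _ => pow_nonneg (hωnn _ (by omega) i.isLt) _)
      (Finset.prod_nonneg fun i _ => pow_nonneg (hωnn _ (by omega) i.isLt) _)
  set D := ((Fintype.piFinset (fun _ : Fin m => (Finset.univ : Finset (Fin n)).powerset)) ×ˢ
      (Fintype.piFinset (fun _ : Fin m => (Finset.univ : Finset (Fin n)).powerset))).filter
      (fun F => NS F.1 = k + NS F.2) with hD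
  have step2 : qtilde n m q (k:ℤ) ≤ ∑ s ∈ S, g (Φ s) := by
    rw [qtilde]
    refine Finset.sum_le_sum fun s hsS => ?_
    exact modWeight_le hn q w hwf hq00 hq01 hqm s (hpaths_mem s hsS)
  have step3 : ∑ s ∈ S, g (Φ s) = ∑ F ∈ S.image Φ, g F := by
    rw [Finset.sum_image]
    intro s hsS s' hsS' heq
    have h1 : ∀ i : Fin m, Finset.univ.filter (fun t => s t = ((i:ℕ):ℤ)+1)
        = Finset.univ.filter (fun t => s' t = ((i:ℕ):ℤ)+1) := by
      intro i
      have := congrArg Prod.fst heq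
      exact congrFun this i
    have h2 : ∀ i : Fin m, Finset.univ.filter (fun t => s t = -(((i:ℕ):ℤ)+1))
        = Finset.univ.filter (fun t => s' t = -(((i:ℕ):ℤ)+1)) := by
      intro i
      have := congrArg Prod.snd heq
      exact congrFun this i
    exact fib_inj s s' (hpaths_mem s hsS) (hpaths_mem s' hsS') h1 h2
  have step4 : ∑ F ∈ S.image Φ, g F ≤ ∑ F ∈ D, g F := by
    refine Finset.sum_le_sum_of_subset_of_nonneg ?_ (fun F _ _ => hg0 F)
    intro F hF
    rw [Finset.mem_image] at hF
    obtain ⟨s, hsS, rfl⟩ := hF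
    rw [hD, Finset.mem_filter]
    constructor
    · rw [Finset.mem_product]
      constructor
      · rw [Fintype.mem_piFinset]
        intro i
        exact Finset.mem_powerset.mpr (Finset.filter_subset _ _)
      · rw [Fintype.mem_piFinset]
        intro i
        exact Finset.mem_powerset.mpr (Finset.filter_subset _ _)
    · -- the level constraint
      have hlev : levelAt n s n = (k:ℤ) := (Finset.mem_filter.mp hsS).2
      rw [levelAt_top] at hlev
      rw [level_count s (hpaths_mem s hsS)] at hlev
      have hcast1 : (∑ i : Fin m, (((i:ℕ):ℤ)+1) *
          ((Finset.univ.filter (fun t => s t = ((i:ℕ):ℤ)+1)).card : ℤ))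
          = ((NS (Φ s).1 : ℕ) : ℤ) := by
        rw [NS]
        push_cast
        rfl
      have hcast2 : (∑ i : Fin m, (((i:ℕ):ℤ)+1) *
          ((Finset.univ.filter (fun t => s t = -(((i:ℕ):ℤ)+1))).card : ℤ))
          = ((NS (Φ s).2 : ℕ) : ℤ) := by
        rw [NS]
        push_cast
        rfl
      rw [hcast1, hcast2] at hlev
      omega
  have hL : ∀ F ∈ D, NS F.2 ∈ Finset.range (m*m*n+1) := by
    intro F hF
    rw [Finset.mem_range, Nat.lt_succ_iff]
    have hFmem := (Finset.mem_filter.mp (hD ▸ hF)).1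
    rw [Finset.mem_product] at hFmem
    have h2 := hFmem.2
    rw [Fintype.mem_piFinset] at h2
    calc NS F.2 ≤ ∑ _i : Fin m, m * n := by
          refine Finset.sum_le_sum fun i _ => ?_
          refine Nat.mul_le_mul ?_ ?_
          · omega
          · calc (F.2 i).card ≤ (Finset.univ : Finset (Fin n)).card :=
                Finset.card_le_card (Finset.mem_powerset.mp (h2 i))
              _ = n := by simp
      _ = m * (m * n) := by rw [Finset.sum_const, Finset.card_univ, Fintype.card_fin, smul_eq_mul]
      _ = m*m*n := by ring
  have step5 : ∑ F ∈ D, g F = ∑ ℓ ∈ Finset.range (m*m*n+1),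
      ∑ F ∈ D.filter (fun F => NS F.2 = ℓ), g F :=
    (Finset.sum_fiberwise_of_maps_to hL g).symm
  have step6 : ∀ ℓ ∈ Finset.range (m*m*n+1),
      ∑ F ∈ D.filter (fun F => NS F.2 = ℓ), g F ≤
        SetSum n (fun i => w i / (n:ℝ)) m (k+ℓ) * SetSum n (fun i => w i / (n:ℝ)) m ℓ := by
    intro ℓ _
    set A := (Fintype.piFinset (fun _ : Fin m => (Finset.univ : Finset (Fin n)).powerset)).filter
      (fun E => NS E = k + ℓ) with hA
    set B := (Fintype.piFinset (fun _ : Fin m => (Finset.univ : Finset (Fin n)).powerset)).filter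
      (fun E => NS E = ℓ) with hB
    have hsub : D.filter (fun F => NS F.2 = ℓ) ⊆ A ×ˢ B := by
      intro F hF
      rw [Finset.mem_filter] at hF
      have hFD := Finset.mem_filter.mp (hD ▸ hF.1)
      have hFm := Finset.mem_product.mp hFD.1
      rw [Finset.mem_product, hA, hB, Finset.mem_filter, Finset.mem_filter]
      exact ⟨⟨hFm.1, by rw [hFD.2, hF.2]⟩, ⟨hFm.2, hF.2⟩⟩
    calc ∑ F ∈ D.filter (fun F => NS F.2 = ℓ), g F
        ≤ ∑ F ∈ A ×ˢ B, g F := Finset.sum_le_sum_of_subset_of_nonneg hsub (fun F _ _ => hg0 F)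
      _ = (∑ E ∈ A, ∏ i : Fin m, (w ((i:ℕ)+1)/(n:ℝ)) ^ (E i).card)
          * (∑ E ∈ B, ∏ i : Fin m, (w ((i:ℕ)+1)/(n:ℝ)) ^ (E i).card) := by
          rw [Finset.sum_product, Finset.sum_mul_sum]
      _ = SetSum n (fun i => w i / (n:ℝ)) m (k+ℓ) * SetSum n (fun i => w i / (n:ℝ)) m ℓ := by
          rw [SetSum, SetSum, hA, hB, Finset.sum_filter, Finset.sum_filter]
  have step7 : ∀ ℓ ∈ Finset.range (m*m*n+1),
      SetSum n (fun i => w i / (n:ℝ)) m (k+ℓ) * SetSum n (fun i => w i / (n:ℝ)) m ℓ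
        ≤ cS w m (k+ℓ) * cS w m ℓ := by
    intro ℓ _
    refine mul_le_mul (SetSum_le_cS hn m hwnn (k+ℓ)) (SetSum_le_cS hn m hwnn ℓ)
      (SetSum_nonneg hωnn) (cS_nonneg m hwnn (k+ℓ))
  calc qtilde n m q (k:ℤ) ≤ ∑ s ∈ S, g (Φ s) := step2
    _ = ∑ F ∈ S.image Φ, g F := step3
    _ ≤ ∑ F ∈ D, g F := step4
    _ = ∑ ℓ ∈ Finset.range (m*m*n+1), ∑ F ∈ D.filter (fun F => NS F.2 = ℓ), g F := step5
    _ ≤ ∑ ℓ ∈ Finset.range (m*m*n+1),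
        SetSum n (fun i => w i / (n:ℝ)) m (k+ℓ) * SetSum n (fun i => w i / (n:ℝ)) m ℓ :=
      Finset.sum_le_sum step6
    _ ≤ ∑ ℓ ∈ Finset.range (m*m*n+1), cS w m (k+ℓ) * cS w m ℓ := Finset.sum_le_sum step7


end HScut

/-- For every integer `k` with `m ⌈2W_m − 1⌉ ≤ k ≤ m n` one has
`q̃^{(n)}(k) ≤ G · W_m^{⌊k/m⌋} / ⌊k/m⌋!`. -/
theorem qtilde_pointwise_bound_general (n m : ℕ) (hn : 1 ≤ n) (hm : 1 ≤ m) (q : ℤ → ℝ)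
    (hq : ∀ l : ℤ, -(m : ℤ) ≤ l → l ≤ (m : ℤ) → 0 ≤ q l)
    (hsum : ∑ l ∈ Finset.Icc (-(m : ℤ)) (m : ℤ), q l = 1)
    (hq1 : 0 < max (q 1) (q (-1)))
    (wf : ℕ → ℝ) (hwf : ∀ i : ℕ, wf i = (n : ℝ) * max (q (i : ℤ)) (q (-(i : ℤ))))
    (k : ℕ) (hk1 : (m : ℤ) * ⌈2 * Wseq wf m - 1⌉ ≤ (k : ℤ)) (hk2 : k ≤ m * n) :
    qtilde n m q (k : ℤ) ≤
      Gconst wf m * Wseq wf m ^ (k / m) / (Nat.factorial (k / m) : ℝ) := by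
  have hn0 : (0:ℝ) < (n:ℝ) := by exact_mod_cast hn
  have h1 : 0 < wf 1 := by
    rw [hwf 1]
    have : ((1:ℕ):ℤ) = 1 := rfl
    rw [this]
    exact mul_pos hn0 hq1
  have hq01 : q 0 ≤ 1 := by
    have h0m : (0:ℤ) ∈ Finset.Icc (-(m:ℤ)) (m:ℤ) := by
      rw [Finset.mem_Icc]
      constructor <;> omega
    calc q 0 ≤ ∑ l ∈ Finset.Icc (-(m : ℤ)) (m : ℤ), q l :=
          Finset.single_le_sum (fun l hl => hq l (Finset.mem_Icc.mp hl).1 (Finset.mem_Icc.mp hl).2) h0m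
      _ = 1 := hsum
  have hwnn : ∀ i, i ≤ m → 0 ≤ wf i := by
    intro i hi
    rw [hwf i]
    refine mul_nonneg (le_of_lt hn0) ?_
    refine le_trans (hq (i:ℤ) (by omega) (by omega)) (le_max_left _ _)
  have h2W : 2 * Wseq wf m ≤ ((k/m : ℕ) : ℝ) + 1 := by
    set c : ℤ := ⌈2 * Wseq wf m - 1⌉ with hc
    have hle : (2 * Wseq wf m - 1 : ℝ) ≤ (c:ℝ) := Int.le_ceil _
    have hcm : c ≤ ((k/m : ℕ) : ℤ) := by
      rcases le_or_gt c 0 with h | h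
      · exact le_trans h (Int.natCast_nonneg _)
      · have hmc : (m:ℤ) * c ≤ (k:ℤ) := hk1
        have : c ≤ (k:ℤ) / (m:ℤ) := by
          rw [Int.le_ediv_iff_mul_le (by exact_mod_cast hm : (0:ℤ) < (m:ℤ))]
          linarith [hmc]
        rwa [← Int.natCast_div] at this
    have hcR : ((c:ℤ):ℝ) ≤ (((k/m : ℕ):ℤ):ℝ) := Int.cast_le.mpr hcm
    rw [Int.cast_natCast] at hcR
    linarith
  calc qtilde n m q (k:ℤ)
      ≤ ∑ ℓ ∈ Finset.range (m*m*n+1), cS wf m (k+ℓ) * cS wf m ℓ :=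
        qtilde_le_pairsum hn hm q wf hq hq01 hwf k
    _ ≤ (2*(m:ℝ)*max (Wseq wf m) 1 * Real.exp (Wseq wf m)
          * ∏ i ∈ Finset.Icc 1 (m-1), (Mseq wf i)^2)
          * (Wseq wf m ^ (k/m) / (Nat.factorial (k/m) : ℝ)) :=
        pairsum_le h1 hm hwnn h2W (m*m*n+1)
    _ = Gconst wf m * Wseq wf m ^ (k / m) / (Nat.factorial (k / m) : ℝ) := by
        rw [Gconst]
        ring
end
end

section
/- For every integer k̄ with m·⌈2W_m − 1⌉ ≤ k̄ ≤ m·n one has ∑_{k=k̄}^{mn} q̃^{(n)}(k) ≤ 2·G·m · W_m^{⌊k̄/m⌋} / ⌊k̄/m⌋!. -/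
open Finset

open scoped Classical

noncomputable section

namespace HSaux
open HScut

lemma binom2 {x y : ℝ} (hx : 0 ≤ x) (hy : 0 ≤ y) :
    ∀ c : ℕ, x ^ c + (c : ℝ) * x ^ (c - 1) * y ≤ (x + y) ^ c
  | 0 => by simp
  | 1 => by simp
  | (c+2) => by
      have h := binom2 hx hy (c+1)
      have hxy : (0:ℝ) ≤ x + y := by linarith
      have key : (x+y) * (x ^ (c+1) + ((c+1:ℕ):ℝ) * x ^ (c+1-1) * y) ≤ (x+y)^(c+2) := by
        calc (x+y) * (x ^ (c+1) + ((c+1:ℕ):ℝ) * x ^ (c+1-1) * y) ≤ (x+y) * (x+y)^(c+1) :=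
          mul_le_mul_of_nonneg_left h hxy
        _ = (x+y)^(c+2) := by ring
      have e1 : c + 1 - 1 = c := rfl
      have e2 : c + 2 - 1 = c + 1 := rfl
      rw [e1] at key
      rw [e2]
      have h3 : (0:ℝ) ≤ (c:ℝ) * (x^c * y * y) := mul_nonneg (Nat.cast_nonneg c) (by positivity)
      simp only [pow_succ] at key ⊢
      push_cast at key ⊢
      nlinarith [key, h3, (by positivity : (0:ℝ) ≤ x^c * y * y)]

lemma prodadd {ι : Type*} [DecidableEq ι] (s : Finset ι) (a b : ι → ℝ)
    (ha : ∀ i ∈ s, 0 ≤ a i) (hb : ∀ i ∈ s, 0 ≤ b i) :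
    (∏ i ∈ s, a i) + ∑ i ∈ s, b i * ∏ j ∈ s.erase i, a j ≤ ∏ i ∈ s, (a i + b i) := by
  induction s using Finset.induction_on with
  | empty => simp
  | @insert j s hj ih =>
    have ha' : ∀ i ∈ s, 0 ≤ a i := fun i hi => ha i (mem_insert_of_mem hi)
    have hb' : ∀ i ∈ s, 0 ≤ b i := fun i hi => hb i (mem_insert_of_mem hi)
    have haj : 0 ≤ a j := ha j (mem_insert_self _ _)
    have hbj : 0 ≤ b j := hb j (mem_insert_self _ _)
    have hS : 0 ≤ ∑ i ∈ s, b i * ∏ j' ∈ s.erase i, a j' :=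
      Finset.sum_nonneg fun i hi => mul_nonneg (hb' _ hi)
        (Finset.prod_nonneg fun x hx => ha' x (Finset.mem_of_mem_erase hx))
    have hP : 0 ≤ ∏ i ∈ s, a i := Finset.prod_nonneg ha'
    rw [Finset.prod_insert hj, Finset.prod_insert hj, Finset.sum_insert hj,
      Finset.erase_insert hj]
    have hrw : ∀ i ∈ s, b i * ∏ j' ∈ (insert j s).erase i, a j'
        = a j * (b i * ∏ j' ∈ s.erase i, a j') := by
      intro i hi
      have hji : j ≠ i := fun h => hj (h ▸ hi)
      rw [Finset.erase_insert_of_ne hji,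
        Finset.prod_insert (fun h => hj (Finset.mem_of_mem_erase h))]
      ring
    rw [Finset.sum_congr rfl hrw, ← Finset.mul_sum]
    have key := mul_le_mul_of_nonneg_left (ih ha' hb') (by linarith : (0:ℝ) ≤ a j + b j)
    nlinarith [mul_nonneg hbj hS]

lemma fact_ratio {w : ℝ} (hw : 0 ≤ w) {j a : ℕ} (h : j ≤ a) :
    w ^ a / (Nat.factorial a : ℝ) ≤ (w ^ j / (Nat.factorial j : ℝ)) * (w ^ (a - j) / (Nat.factorial (a - j) : ℝ)) := by
  have h1 : ((Nat.factorial j : ℝ) * (Nat.factorial (a - j) : ℝ)) ≤ (Nat.factorial a : ℝ) := by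
    exact_mod_cast Nat.le_of_dvd (Nat.factorial_pos a)
      (Nat.factorial_mul_factorial_dvd_factorial h)
  have h2 : w ^ a = w ^ j * w ^ (a - j) := by
    rw [← pow_add]; congr 1; omega
  rw [h2, div_mul_div_comm]
  gcongr


/-- exponential tail sums -/
lemma tail_shift {w : ℝ} (hw : 0 ≤ w) (ν j t0 : ℕ) :
    ∑ a ∈ (range (ν+1)).filter (fun a => j + t0 ≤ a), w ^ (a - j) / (Nat.factorial (a - j) : ℝ)
      ≤ ∑ t ∈ (range (ν+1)).filter (fun t => t0 ≤ t), w ^ t / (Nat.factorial t : ℝ) := by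
  have himg := Finset.sum_image (s := (range (ν+1)).filter (fun a => j + t0 ≤ a))
    (g := fun a => a - j) (f := fun t => w ^ t / (Nat.factorial t : ℝ))
    (by intro x hx y hy hxy
        simp only [Finset.mem_coe, Finset.mem_filter, Finset.mem_range] at hx hy
        dsimp only at hxy
        omega)
  rw [← himg]
  apply Finset.sum_le_sum_of_subset_of_nonneg
  · intro t ht
    simp only [Finset.mem_image, Finset.mem_filter, Finset.mem_range] at ht ⊢
    obtain ⟨a, ⟨ha1, ha2⟩, rfl⟩ := ht
    omega
  · intro t _ _
    positivity

lemma tail_one {w : ℝ} (hw : 0 ≤ w) (ν j : ℕ) :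
    ∑ a ∈ (range (ν+1)).filter (fun a => j ≤ a), w ^ a / (Nat.factorial a : ℝ)
      ≤ w ^ j / (Nat.factorial j : ℝ) * Real.exp w := by
  calc ∑ a ∈ (range (ν+1)).filter (fun a => j ≤ a), w ^ a / (Nat.factorial a : ℝ)
      ≤ ∑ a ∈ (range (ν+1)).filter (fun a => j ≤ a),
          (w ^ j / (Nat.factorial j : ℝ)) * (w ^ (a-j) / (Nat.factorial (a-j) : ℝ)) := by
        apply Finset.sum_le_sum
        intro a ha
        simp only [Finset.mem_filter] at ha
        exact fact_ratio hw ha.2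
    _ = (w ^ j / (Nat.factorial j : ℝ)) *
          ∑ a ∈ (range (ν+1)).filter (fun a => j + 0 ≤ a), w ^ (a-j) / (Nat.factorial (a-j) : ℝ) := by
        rw [← Finset.mul_sum]; simp
    _ ≤ (w ^ j / (Nat.factorial j : ℝ)) *
          ∑ t ∈ (range (ν+1)).filter (fun t => 0 ≤ t), w ^ t / (Nat.factorial t : ℝ) := by
        apply mul_le_mul_of_nonneg_left (tail_shift hw ν j 0) (by positivity)
    _ ≤ w ^ j / (Nat.factorial j : ℝ) * Real.exp w := by
        apply mul_le_mul_of_nonneg_left _ (by positivity)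
        calc ∑ t ∈ (range (ν+1)).filter (fun t => 0 ≤ t), w ^ t / (Nat.factorial t : ℝ)
            = ∑ t ∈ range (ν+1), w ^ t / (Nat.factorial t : ℝ) := by
              apply Finset.sum_congr _ (fun _ _ => rfl)
              simp
          _ ≤ Real.exp w := Real.sum_le_exp_of_nonneg hw _

lemma tail_two {w : ℝ} (hw : 0 ≤ w) (ν j : ℕ) :
    ∑ a ∈ (range (ν+1)).filter (fun a => j + 1 ≤ a), w ^ a / (Nat.factorial a : ℝ)
      ≤ w ^ j / (Nat.factorial j : ℝ) * (Real.exp w - 1) := by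
  calc ∑ a ∈ (range (ν+1)).filter (fun a => j + 1 ≤ a), w ^ a / (Nat.factorial a : ℝ)
      ≤ ∑ a ∈ (range (ν+1)).filter (fun a => j + 1 ≤ a),
          (w ^ j / (Nat.factorial j : ℝ)) * (w ^ (a-j) / (Nat.factorial (a-j) : ℝ)) := by
        apply Finset.sum_le_sum
        intro a ha
        simp only [Finset.mem_filter] at ha
        exact fact_ratio hw (by omega)
    _ = (w ^ j / (Nat.factorial j : ℝ)) *
          ∑ a ∈ (range (ν+1)).filter (fun a => j + 1 ≤ a), w ^ (a-j) / (Nat.factorial (a-j) : ℝ) := by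
        rw [← Finset.mul_sum]
    _ ≤ w ^ j / (Nat.factorial j : ℝ) * (Real.exp w - 1) := by
        apply mul_le_mul_of_nonneg_left _ (by positivity)
        calc ∑ a ∈ (range (ν+1)).filter (fun a => j + 1 ≤ a), w ^ (a-j) / (Nat.factorial (a-j) : ℝ)
            ≤ ∑ t ∈ (range (ν+1)).filter (fun t => 1 ≤ t), w ^ t / (Nat.factorial t : ℝ) :=
              tail_shift hw ν j 1
          _ ≤ Real.exp w - 1 := by
              have hsplit : ∑ t ∈ range (ν+1), w ^ t / (Nat.factorial t : ℝ)
                  = 1 + ∑ t ∈ (range (ν+1)).filter (fun t => 1 ≤ t), w ^ t / (Nat.factorial t : ℝ) := by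
                rw [← Finset.sum_filter_add_sum_filter_not (range (ν+1)) (fun t => 1 ≤ t)]
                have h0 : ∑ t ∈ (range (ν+1)).filter (fun t => ¬ 1 ≤ t),
                    w ^ t / (Nat.factorial t : ℝ) = 1 := by
                  have he : (range (ν+1)).filter (fun t => ¬ 1 ≤ t) = {0} := by
                    ext t
                    simp only [Finset.mem_filter, Finset.mem_range, Finset.mem_singleton, not_le]
                    omega
                  rw [he]; simp
                rw [h0]; ring
              have := Real.sum_le_exp_of_nonneg hw (ν+1)
              rw [hsplit] at this
              linarith


def box (m ν : ℕ) : Finset (Fin m → ℕ) := Fintype.piFinset fun _ => Finset.range (ν+1)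

def HW (w : ℕ → ℝ) (m ν K : ℕ) : ℝ :=
  ∑ c ∈ (box m ν).filter (fun c => K ≤ ∑ i : Fin m, ((i : ℕ)+1) * c i),
    ∏ i : Fin m, w ((i : ℕ)+1) ^ (c i) / (Nat.factorial (c i) : ℝ)

lemma HW_term_nonneg {w : ℕ → ℝ} {m : ℕ} (hw : ∀ k, 1 ≤ k → k ≤ m → 0 ≤ w k)
    (c : Fin m → ℕ) : 0 ≤ ∏ i : Fin m, w ((i : ℕ)+1) ^ (c i) / (Nat.factorial (c i) : ℝ) := by
  apply Finset.prod_nonneg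
  intro i _
  have : 0 ≤ w ((i : ℕ)+1) := hw _ (by omega) (by have := i.isLt; omega)
  positivity

lemma HW_nonneg {w : ℕ → ℝ} {m : ℕ} (hw : ∀ k, 1 ≤ k → k ≤ m → 0 ≤ w k) (ν K : ℕ) :
    0 ≤ HW w m ν K :=
  Finset.sum_nonneg fun c _ => HW_term_nonneg hw c

lemma HW_anti {w : ℕ → ℝ} {m : ℕ} (hw : ∀ k, 1 ≤ k → k ≤ m → 0 ≤ w k) (ν : ℕ)
    {K K' : ℕ} (h : K' ≤ K) : HW w m ν K ≤ HW w m ν K' := by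
  apply Finset.sum_le_sum_of_subset_of_nonneg
  · intro c hc
    simp only [Finset.mem_filter] at hc ⊢
    exact ⟨hc.1, le_trans h hc.2⟩
  · intro c _ _
    exact HW_term_nonneg hw c

lemma HW_zero (w : ℕ → ℝ) (ν K : ℕ) : HW w 0 ν K = if K = 0 then 1 else 0 := by
  have hbox : box 0 ν = Finset.univ := by
    ext c
    simp [box, Fintype.mem_piFinset]
  have huniv : (Finset.univ : Finset (Fin 0 → ℕ)) = {fun i => i.elim0} := by
    ext c
    simp only [Finset.mem_univ, Finset.mem_singleton, true_iff]
    funext i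
    exact i.elim0
  unfold HW
  rw [hbox, huniv]
  by_cases hK : K = 0 <;> simp [hK, Finset.filter_singleton]

lemma HW_one_le {w : ℕ → ℝ} {m : ℕ} (hw : ∀ k, 1 ≤ k → k ≤ m → 0 ≤ w k) (ν : ℕ) :
    (1:ℝ) ≤ HW w m ν 0 := by
  have hmem : (fun _ => 0 : Fin m → ℕ) ∈
      (box m ν).filter (fun c => 0 ≤ ∑ i : Fin m, ((i : ℕ)+1) * c i) := by
    simp [box, Fintype.mem_piFinset]
  have hval : (∏ i : Fin m, w ((i : ℕ)+1) ^ ((fun _ => 0 : Fin m → ℕ) i)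
      / (Nat.factorial ((fun _ => 0 : Fin m → ℕ) i) : ℝ)) = 1 := by simp
  unfold HW
  rw [← hval]
  exact Finset.single_le_sum (fun c _ => HW_term_nonneg hw c) hmem

lemma sum_piFinset_succ {α : Type*} [DecidableEq α] (V : Finset α) (k : ℕ)
    (f : (Fin (k+1) → α) → ℝ) :
    ∑ s ∈ Fintype.piFinset (fun _ : Fin (k+1) => V), f s
      = ∑ v ∈ V, ∑ t ∈ Fintype.piFinset (fun _ : Fin k => V), f (Fin.snoc t v) := by
  rw [← Finset.sum_product']
  apply Finset.sum_nbij' (i := fun s => (s (Fin.last k), Fin.init s))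
    (j := fun p => Fin.snoc p.2 p.1)
  · intro s hs
    simp only [Fintype.mem_piFinset] at hs
    simp only [Finset.mem_product, Fintype.mem_piFinset]
    exact ⟨hs _, fun i => hs _⟩
  · intro p hp
    simp only [Finset.mem_product, Fintype.mem_piFinset] at hp
    simp only [Fintype.mem_piFinset]
    intro i
    rcases Fin.eq_castSucc_or_eq_last i with ⟨i', rfl⟩ | rfl
    · rw [Fin.snoc_castSucc]; exact hp.2 i'
    · rw [Fin.snoc_last]; exact hp.1
  · intro s _
    exact Fin.snoc_init_self s
  · intro p _
    simp [Fin.init_snoc, Fin.snoc_last]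
  · intro s _
    rw [Fin.snoc_init_self s]

lemma Hdecomp (w : ℕ → ℝ) (m ν K : ℕ) :
    HW w (m+1) ν K
      = ∑ a ∈ range (ν+1), (w (m+1) ^ a / (Nat.factorial a : ℝ)) * HW w m ν (K - (m+1) * a) := by
  unfold HW box
  rw [Finset.sum_filter, sum_piFinset_succ]
  apply Finset.sum_congr rfl
  intro a _
  rw [Finset.mul_sum, Finset.sum_filter]
  apply Finset.sum_congr rfl
  intro c _
  have hsum : ∑ i : Fin (m+1), ((i:ℕ)+1) * (Fin.snoc c a : Fin (m+1) → ℕ) i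
      = (m+1)*a + ∑ i : Fin m, ((i:ℕ)+1) * c i := by
    rw [Fin.sum_univ_castSucc]
    simp only [Fin.snoc_castSucc, Fin.snoc_last, Fin.coe_castSucc, Fin.val_last]
    ring
  have hprod : ∏ i : Fin (m+1),
        w ((i:ℕ)+1) ^ ((Fin.snoc c a : Fin (m+1) → ℕ) i)
          / (Nat.factorial ((Fin.snoc c a : Fin (m+1) → ℕ) i) : ℝ)
      = (∏ i : Fin m, w ((i:ℕ)+1) ^ (c i) / (Nat.factorial (c i) : ℝ))
          * (w (m+1) ^ a / (Nat.factorial a : ℝ)) := by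
    rw [Fin.prod_univ_castSucc]
    simp only [Fin.snoc_castSucc, Fin.snoc_last, Fin.coe_castSucc, Fin.val_last]
  rw [hsum, hprod]
  have hcond : (K ≤ (m+1)*a + ∑ i : Fin m, ((i:ℕ)+1) * c i)
      ↔ (K - (m+1)*a ≤ ∑ i : Fin m, ((i:ℕ)+1) * c i) := by omega
  by_cases h : K - (m+1)*a ≤ ∑ i : Fin m, ((i:ℕ)+1) * c i
  · rw [if_pos (hcond.mpr h), if_pos h]
    ring
  · rw [if_neg (fun hh => h (hcond.mp hh)), if_neg h]


lemma L2 (ρ : ℕ → ℝ) (m : ℕ) (hρ : ∀ k, 1 ≤ k → k ≤ m → 0 ≤ ρ k) (ν K : ℕ) :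
    HW (fun i => (ν:ℝ) * ρ i) m ν K
      + ∑ i : Fin m, ρ ((i:ℕ)+1) * HW (fun i' => (ν:ℝ) * ρ i') m ν (K - ((i:ℕ)+1))
      ≤ HW (fun i => ((ν:ℝ)+1) * ρ i) m (ν+1) K := by
  classical
  set w : ℕ → ℝ := fun i => (ν:ℝ) * ρ i with hwdef
  have hwnn : ∀ k, 1 ≤ k → k ≤ m → 0 ≤ w k := fun k h1 h2 =>
    mul_nonneg (by positivity) (hρ k h1 h2)
  have hρi : ∀ i : Fin m, 0 ≤ ρ ((i:ℕ)+1) := fun i =>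
    hρ _ (by omega) (by have := i.isLt; omega)
  have hwi : ∀ i : Fin m, 0 ≤ w ((i:ℕ)+1) := fun i =>
    hwnn _ (by omega) (by have := i.isLt; omega)
  set A : (Fin m → ℕ) → Fin m → ℝ :=
    fun c i => w ((i:ℕ)+1) ^ (c i) / (Nat.factorial (c i) : ℝ) with hA
  set B : (Fin m → ℕ) → Fin m → ℝ := fun c i =>
    if c i = 0 then 0
    else ρ ((i:ℕ)+1) * w ((i:ℕ)+1) ^ (c i - 1) / (Nat.factorial (c i - 1) : ℝ) with hB
  have hAnn : ∀ c i, 0 ≤ A c i := fun c i => by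
    have := hwi i; simp only [hA]; positivity
  have hBnn : ∀ c i, 0 ≤ B c i := fun c i => by
    simp only [hB]
    split
    · exact le_rfl
    · have := hwi i; have := hρi i; positivity
  set F := (box m (ν+1)).filter (fun c => K ≤ ∑ i : Fin m, ((i:ℕ)+1) * c i) with hF
  have hpoint : ∀ c : Fin m → ℕ,
      (∏ i : Fin m, A c i) + ∑ i : Fin m, B c i * ∏ i' ∈ Finset.univ.erase i, A c i'
      ≤ ∏ i : Fin m, (((ν:ℝ)+1) * ρ ((i:ℕ)+1)) ^ (c i) / (Nat.factorial (c i) : ℝ) := by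
    intro c
    have h1 : ∀ i : Fin m, A c i + B c i
        ≤ (((ν:ℝ)+1) * ρ ((i:ℕ)+1)) ^ (c i) / (Nat.factorial (c i) : ℝ) := by
      intro i
      rcases Nat.eq_zero_or_pos (c i) with h0 | h0
      · simp [hA, hB, h0]
      · obtain ⟨k, hk⟩ : ∃ k, c i = k + 1 := ⟨c i - 1, by omega⟩
        have hxy : w ((i:ℕ)+1) + ρ ((i:ℕ)+1) = ((ν:ℝ)+1) * ρ ((i:ℕ)+1) := by
          simp only [hwdef]; ring
        have hb := binom2 (hwi i) (hρi i) (k+1)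
        rw [hxy] at hb
        simp only [Nat.add_sub_cancel] at hb
        push_cast at hb
        simp only [hA, hB, hk, if_neg (Nat.succ_ne_zero k), Nat.add_sub_cancel]
        have hkfac : (Nat.factorial (k+1) : ℝ) = ((k:ℝ)+1) * (Nat.factorial k : ℝ) := by
          rw [Nat.factorial_succ]; push_cast; ring
        have heq : w ((i:ℕ)+1) ^ (k+1) / (Nat.factorial (k+1) : ℝ)
            + ρ ((i:ℕ)+1) * w ((i:ℕ)+1) ^ k / (Nat.factorial k : ℝ)
            = (w ((i:ℕ)+1) ^ (k+1) + ((k:ℝ)+1) * w ((i:ℕ)+1) ^ k * ρ ((i:ℕ)+1))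
              / (Nat.factorial (k+1) : ℝ) := by
          rw [hkfac]
          have : (Nat.factorial k : ℝ) ≠ 0 := by positivity
          field_simp
        rw [heq]
        gcongr
    calc (∏ i : Fin m, A c i) + ∑ i : Fin m, B c i * ∏ i' ∈ Finset.univ.erase i, A c i'
        ≤ ∏ i : Fin m, (A c i + B c i) :=
          prodadd Finset.univ (A c) (B c) (fun i _ => hAnn c i) (fun i _ => hBnn c i)
      _ ≤ ∏ i : Fin m, (((ν:ℝ)+1) * ρ ((i:ℕ)+1)) ^ (c i) / (Nat.factorial (c i) : ℝ) := by
          apply Finset.prod_le_prod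
          · intro i _; exact add_nonneg (hAnn c i) (hBnn c i)
          · intro i _; exact h1 i
  have part1 : HW w m ν K ≤ ∑ c ∈ F, ∏ i : Fin m, A c i := by
    apply Finset.sum_le_sum_of_subset_of_nonneg
    · intro c hc
      simp only [hF, Finset.mem_filter, box, Fintype.mem_piFinset, Finset.mem_range] at hc ⊢
      exact ⟨fun i => by have := hc.1 i; omega, hc.2⟩
    · intro c _ _
      exact Finset.prod_nonneg fun i _ => hAnn c i
  have part2 : ∀ i : Fin m, ρ ((i:ℕ)+1) * HW w m ν (K - ((i:ℕ)+1))
      ≤ ∑ c ∈ F, B c i * ∏ i' ∈ Finset.univ.erase i, A c i' := by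
    intro i
    set φ : (Fin m → ℕ) → (Fin m → ℕ) := fun c' => Function.update c' i (c' i + 1) with hφ
    set Fi := (box m ν).filter
      (fun c => K - ((i:ℕ)+1) ≤ ∑ i' : Fin m, ((i':ℕ)+1) * c i') with hFi
    have hupdsum : ∀ c' : Fin m → ℕ,
        ∑ i' : Fin m, ((i':ℕ)+1) * (φ c') i'
          = (∑ i' : Fin m, ((i':ℕ)+1) * c' i') + ((i:ℕ)+1) := by
      intro c'
      rw [← Finset.add_sum_erase _ (fun i' : Fin m => ((i':ℕ)+1) * (φ c') i') (Finset.mem_univ i),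
        ← Finset.add_sum_erase _ (fun i' : Fin m => ((i':ℕ)+1) * c' i') (Finset.mem_univ i)]
      have herase : ∑ i' ∈ Finset.univ.erase i, ((i':ℕ)+1) * (φ c') i'
          = ∑ i' ∈ Finset.univ.erase i, ((i':ℕ)+1) * c' i' :=
        Finset.sum_congr rfl fun i' hi' => by
          rw [hφ]; simp only [Function.update_of_ne (Finset.ne_of_mem_erase hi')]
      rw [herase]
      simp only [hφ, Function.update_self]
      ring
    have hφmem : ∀ c' ∈ Fi, φ c' ∈ F := by
      intro c' hc'
      simp only [hFi, Finset.mem_filter, box, Fintype.mem_piFinset, Finset.mem_range] at hc'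
      simp only [hF, Finset.mem_filter, box, Fintype.mem_piFinset, Finset.mem_range]
      constructor
      · intro i''
        by_cases hii : i'' = i
        · subst hii; simp only [hφ, Function.update_self]
          have := hc'.1 i''; omega
        · simp only [hφ, Function.update_of_ne hii]
          have := hc'.1 i''; omega
      · rw [hupdsum c']
        have := hc'.2
        omega
    have hφinj : ∀ a ∈ Fi, ∀ b ∈ Fi, φ a = φ b → a = b := by
      intro a _ b _ hab
      funext i''
      have := congrFun hab i''
      by_cases hii : i'' = i
      · subst hii
        simp only [hφ, Function.update_self] at this
        omega
      · simpa only [hφ, Function.update_of_ne hii] using this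
    have hval : ∀ c' : Fin m → ℕ,
        B (φ c') i * ∏ i' ∈ Finset.univ.erase i, A (φ c') i'
          = ρ ((i:ℕ)+1) * ∏ i' : Fin m, A c' i' := by
      intro c'
      have hBval : B (φ c') i = ρ ((i:ℕ)+1) * A c' i := by
        simp only [hB, hφ, Function.update_self, Nat.add_sub_cancel, hA]
        rw [if_neg (Nat.succ_ne_zero _)]
        ring
      have hAerase : ∏ i' ∈ Finset.univ.erase i, A (φ c') i'
          = ∏ i' ∈ Finset.univ.erase i, A c' i' :=
        Finset.prod_congr rfl fun i' hi' => by
          simp only [hA, hφ, Function.update_of_ne (Finset.ne_of_mem_erase hi')]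
      rw [hBval, hAerase, mul_assoc, Finset.mul_prod_erase _ (A c') (Finset.mem_univ i)]
    calc ρ ((i:ℕ)+1) * HW w m ν (K - ((i:ℕ)+1))
        = ∑ c' ∈ Fi, ρ ((i:ℕ)+1) * ∏ i' : Fin m, A c' i' := by
          rw [show HW w m ν (K - ((i:ℕ)+1)) = ∑ c' ∈ Fi, ∏ i' : Fin m, A c' i' from rfl,
            Finset.mul_sum]
      _ = ∑ c' ∈ Fi, B (φ c') i * ∏ i' ∈ Finset.univ.erase i, A (φ c') i' :=
          Finset.sum_congr rfl fun c' _ => (hval c').symm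
      _ = ∑ c ∈ Fi.image φ, B c i * ∏ i' ∈ Finset.univ.erase i, A c i' :=
          (Finset.sum_image (g := φ)
            (f := fun c => B c i * ∏ i' ∈ Finset.univ.erase i, A c i') hφinj).symm
      _ ≤ ∑ c ∈ F, B c i * ∏ i' ∈ Finset.univ.erase i, A c i' := by
          apply Finset.sum_le_sum_of_subset_of_nonneg
          · intro c hc
            simp only [Finset.mem_image] at hc
            obtain ⟨c', hc', rfl⟩ := hc
            exact hφmem c' hc'
          · intro c _ _
            exact mul_nonneg (hBnn c i) (Finset.prod_nonneg fun i' _ => hAnn c i')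
  calc HW w m ν K + ∑ i : Fin m, ρ ((i:ℕ)+1) * HW w m ν (K - ((i:ℕ)+1))
      ≤ (∑ c ∈ F, ∏ i : Fin m, A c i)
        + ∑ i : Fin m, ∑ c ∈ F, B c i * ∏ i' ∈ Finset.univ.erase i, A c i' :=
        add_le_add part1 (Finset.sum_le_sum fun i _ => part2 i)
    _ = ∑ c ∈ F, ((∏ i : Fin m, A c i)
        + ∑ i : Fin m, B c i * ∏ i' ∈ Finset.univ.erase i, A c i') := by
        rw [Finset.sum_comm (s := Finset.univ) (t := F), Finset.sum_add_distrib]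
    _ ≤ ∑ c ∈ F, ∏ i : Fin m, (((ν:ℝ)+1) * ρ ((i:ℕ)+1)) ^ (c i) / (Nat.factorial (c i) : ℝ) :=
        Finset.sum_le_sum fun c _ => hpoint c
    _ = HW (fun i => ((ν:ℝ)+1) * ρ i) m (ν+1) K := rfl


lemma Wpos (w : ℕ → ℝ) (h1 : 0 < w 1) :
    ∀ i, 1 ≤ i → (∀ k, 2 ≤ k → k ≤ i → 0 ≤ w k) → 0 < Wseq w i := by
  intro i
  induction i with
  | zero => omega
  | succ n ih =>
    intro _ hk
    rcases Nat.eq_zero_or_pos n with rfl | hn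
    · simpa [Wseq] using h1
    · obtain ⟨n', rfl⟩ : ∃ n', n = n' + 1 := ⟨n - 1, by omega⟩
      have hprev : 0 < Wseq w (n'+1) := ih (by omega) (fun k a b => hk k a (by omega))
      have hw2 : 0 ≤ w (n'+2) := hk _ (by omega) (by omega)
      have hrp : 0 < Wseq w (n'+1) ^ (((n':ℝ)+2)/((n':ℝ)+1)) := Real.rpow_pos_of_pos hprev _
      show 0 < Wseq w (n'+2)
      rw [show Wseq w (n'+2) = w (n'+2) + Wseq w (n'+1) ^ (((n':ℝ)+2)/((n':ℝ)+1)) from rfl]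
      linarith

lemma Mge1 {w : ℕ → ℝ} {i : ℕ} (hi : 1 ≤ i) (hW : 0 < Wseq w i) : 1 ≤ Mseq w i := by
  rcases le_or_gt 1 (Wseq w i) with h | h
  · exact le_trans h (le_max_left _ _)
  · refine le_trans ?_ (le_max_right _ _)
    apply Real.one_le_rpow_of_pos_of_le_one_of_nonpos hW (le_of_lt h)
    apply div_nonpos_of_nonpos_of_nonneg
    · have : (1:ℝ) ≤ (i:ℝ) := by exact_mod_cast hi
      linarith
    · positivity

lemma TS (w : ℕ → ℝ) : ∀ m, 1 ≤ m → ∑ i ∈ Icc 1 m, w i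
    = Wseq w m + ∑ i ∈ Icc 1 (m-1), (Wseq w i - Wseq w i ^ (((i:ℝ)+1)/(i:ℝ))) := by
  intro m
  induction m with
  | zero => omega
  | succ n ih =>
    intro _
    rcases Nat.eq_zero_or_pos n with rfl | hn
    · simp [Wseq]
    · obtain ⟨n', rfl⟩ : ∃ n', n = n' + 1 := ⟨n - 1, by omega⟩
      have hIH := ih (by omega)
      have h2 : n' + 1 - 1 = n' := rfl
      rw [h2] at hIH
      rw [show n'+1+1 = n'+2 from rfl]
      rw [Finset.sum_Icc_succ_top (by omega : 1 ≤ n'+2) w, hIH]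
      rw [show n' + 2 - 1 = n' + 1 from rfl]
      rw [Finset.sum_Icc_succ_top (by omega : 1 ≤ n'+1)
        (fun i => Wseq w i - Wseq w i ^ (((i:ℝ)+1)/(i:ℝ)))]
      have hW2 : Wseq w (n'+2) = w (n'+2) + Wseq w (n'+1) ^ (((n':ℝ)+2)/((n':ℝ)+1)) := rfl
      have hexp : (((n'+1:ℕ):ℝ)+1)/((n'+1:ℕ):ℝ) = ((n':ℝ)+2)/((n':ℝ)+1) := by
        push_cast; ring
      rw [hW2, hexp]
      ring

lemma binom_id (x y : ℝ) (j : ℕ) :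
    ∑ a ∈ range (j+1), (x^a/(Nat.factorial a : ℝ)) * (y^(j-a)/(Nat.factorial (j-a) : ℝ))
      = (x+y)^j / (Nat.factorial j : ℝ) := by
  rw [add_pow, Finset.sum_div]
  apply Finset.sum_congr rfl
  intro a ha
  have haj : a ≤ j := by simp only [Finset.mem_range] at ha; omega
  have h' : ((j.choose a : ℕ) : ℝ) * (Nat.factorial a : ℝ) * (Nat.factorial (j-a) : ℝ)
      = (Nat.factorial j : ℝ) := by
    exact_mod_cast Nat.choose_mul_factorial_mul_factorial haj
  rw [div_mul_div_comm, div_eq_div_iff (by positivity) (by positivity), ← h']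
  ring

lemma key_ratio (w : ℕ → ℝ) (n : ℕ) (hn : 1 ≤ n) (hW : 0 < Wseq w n) (b : ℕ) :
    Wseq w n ^ (b + b / n) / (Nat.factorial (b + b / n) : ℝ)
      ≤ Mseq w n * ((Wseq w n ^ (((n:ℝ)+1)/(n:ℝ))) ^ b / (Nat.factorial b : ℝ)) := by
  have hnR : (0:ℝ) < (n:ℝ) := by exact_mod_cast hn
  set W := Wseq w n with hWdef
  set t := b / n with ht
  have hXb : (W ^ (((n:ℝ)+1)/(n:ℝ))) ^ b = W ^ b * W ^ ((b:ℝ)/(n:ℝ)) := by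
    rw [← Real.rpow_natCast (W ^ (((n:ℝ)+1)/(n:ℝ))) b, ← Real.rpow_mul (le_of_lt hW),
      ← Real.rpow_natCast W b, ← Real.rpow_add hW]
    congr 1
    field_simp
  have htb : (t:ℝ) - (b:ℝ)/(n:ℝ) ≤ 0 := by
    rw [sub_nonpos, le_div_iff₀ hnR]
    exact_mod_cast Nat.div_mul_le_self b n
  have htb2 : (1 - (n:ℝ))/(n:ℝ) ≤ (t:ℝ) - (b:ℝ)/(n:ℝ) := by
    have hb : (n:ℝ)*(t:ℝ) + ((b % n : ℕ):ℝ) = (b:ℝ) := by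
      exact_mod_cast Nat.div_add_mod b n
    have hrem : ((b % n : ℕ):ℝ) + 1 ≤ (n:ℝ) := by
      exact_mod_cast Nat.mod_lt b (show 0 < n by omega)
    have hfield : ((b:ℝ)/(n:ℝ))*(n:ℝ) = (b:ℝ) := div_mul_cancel₀ _ (ne_of_gt hnR)
    rw [div_le_iff₀ hnR]
    have hexpand : ((t:ℝ) - (b:ℝ)/(n:ℝ))*(n:ℝ) = (t:ℝ)*(n:ℝ) - ((b:ℝ)/(n:ℝ))*(n:ℝ) := by ring
    rw [hexpand, hfield]
    linarith
  have hM1 : 1 ≤ Mseq w n := Mge1 hn hW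
  have hWt : W ^ t ≤ Mseq w n * W ^ ((b:ℝ)/(n:ℝ)) := by
    have h1 : W ^ t = W ^ ((t:ℝ) - (b:ℝ)/(n:ℝ)) * W ^ ((b:ℝ)/(n:ℝ)) := by
      rw [← Real.rpow_add hW, ← Real.rpow_natCast W t]
      congr 1
      ring
    rw [h1]
    apply mul_le_mul_of_nonneg_right _ (le_of_lt (Real.rpow_pos_of_pos hW _))
    rcases le_or_gt 1 W with hW1 | hW1
    · exact le_trans (Real.rpow_le_one_of_one_le_of_nonpos hW1 htb) hM1
    · refine le_trans (Real.rpow_le_rpow_of_exponent_ge hW (le_of_lt hW1) htb2) ?_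
      exact le_max_right _ _
  have hfact : (Nat.factorial b : ℝ) ≤ (Nat.factorial (b+t) : ℝ) := by
    exact_mod_cast Nat.factorial_le (Nat.le_add_right b t)
  calc W ^ (b + t) / (Nat.factorial (b+t) : ℝ)
      ≤ W ^ (b + t) / (Nat.factorial b : ℝ) := by
        have hwnn : (0:ℝ) ≤ W := le_of_lt hW
        have hp := pow_nonneg hwnn (b+t)
        gcongr
    _ = W ^ b * W ^ t / (Nat.factorial b : ℝ) := by rw [pow_add]
    _ ≤ W ^ b * (Mseq w n * W ^ ((b:ℝ)/(n:ℝ))) / (Nat.factorial b : ℝ) := by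
        have hp := pow_nonneg (le_of_lt hW) b
        gcongr

    _ = Mseq w n * ((W ^ (((n:ℝ)+1)/(n:ℝ))) ^ b / (Nat.factorial b : ℝ)) := by
        rw [hXb]; ring


lemma LA (w : ℕ → ℝ) :
    ∀ m, 1 ≤ m → (∀ k, 1 ≤ k → k ≤ m → 0 ≤ w k) → 0 < w 1 → ∀ ν j,
    HW w m ν (m * j)
      ≤ Real.exp (∑ i ∈ Icc 1 m, w i) * (∏ i ∈ Icc 1 (m-1), Mseq w i)
        * (Wseq w m ^ j / (Nat.factorial j : ℝ)) := by
  intro m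
  induction m with
  | zero => omega
  | succ n ih =>
    intro _ hw h1 ν j
    rcases Nat.eq_zero_or_pos n with rfl | hn
    · -- base case m = 1
      have hw1 : 0 ≤ w 1 := le_of_lt h1
      have hde := Hdecomp w 0 ν (1 * j)
      rw [show (0:ℕ)+1 = 1 from rfl] at hde
      rw [hde]
      have heval : ∀ a ∈ range (ν+1), w 1 ^ a / (Nat.factorial a : ℝ) * HW w 0 ν (1*j - 1*a)
          = if j ≤ a then w 1 ^ a / (Nat.factorial a : ℝ) else 0 := by
        intro a _
        rw [HW_zero]
        by_cases h : j ≤ a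
        · rw [if_pos (by omega : 1*j - 1*a = 0), if_pos h, mul_one]
        · rw [if_neg (by omega : ¬ 1*j - 1*a = 0), if_neg h, mul_zero]
      rw [Finset.sum_congr rfl heval, ← Finset.sum_filter]
      refine le_trans (tail_one hw1 ν j) (le_of_eq ?_)
      rw [show (1:ℕ) - 1 = 0 from rfl, show Icc 1 0 = (∅ : Finset ℕ) from rfl,
        Finset.prod_empty, Finset.Icc_self, Finset.sum_singleton,
        show Wseq w 1 = w 1 from rfl]
      ring
    · -- inductive step : m = n + 1 with n ≥ 1
      have hwn : ∀ k, 1 ≤ k → k ≤ n → 0 ≤ w k := fun k a b => hw k a (by omega)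
      have hWn : 0 < Wseq w n := Wpos w h1 n hn (fun k a b => hw k (by omega) (by omega))
      have hMn : 1 ≤ Mseq w n := Mge1 hn hWn
      have hwn1 : 0 ≤ w (n+1) := hw _ (by omega) le_rfl
      set D := Real.exp (∑ i ∈ Icc 1 n, w i) * (∏ i ∈ Icc 1 (n-1), Mseq w i) with hD
      have hprodM : (1:ℝ) ≤ ∏ i ∈ Icc 1 (n-1), Mseq w i := by
        calc (1:ℝ) = ∏ _i ∈ Icc 1 (n-1), (1:ℝ) := by simp
          _ ≤ ∏ i ∈ Icc 1 (n-1), Mseq w i := by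
            apply Finset.prod_le_prod (fun i _ => zero_le_one)
            intro i hi
            simp only [Finset.mem_Icc] at hi
            exact Mge1 hi.1 (Wpos w h1 i hi.1 (fun k a b => hw k (by omega) (by omega)))
      have hDpos : 0 < D :=
        mul_pos (Real.exp_pos _) (lt_of_lt_of_le one_pos hprodM)
      set X := Wseq w n ^ (((n:ℝ)+1)/(n:ℝ)) with hX
      have hXpos : 0 < X := Real.rpow_pos_of_pos hWn _
      have hWsucc : Wseq w (n+1) = w (n+1) + X := by
        obtain ⟨n', rfl⟩ : ∃ n', n = n' + 1 := ⟨n - 1, by omega⟩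
        rw [show Wseq w (n'+1+1) = w (n'+2)
          + Wseq w (n'+1) ^ (((n':ℝ)+2)/((n':ℝ)+1)) from rfl]
        rw [hX, show ((((n'+1):ℕ):ℝ)+1)/(((n'+1):ℕ):ℝ) = ((n':ℝ)+2)/((n':ℝ)+1) from
          by push_cast; ring]
      have hWs_pos : 0 < Wseq w (n+1) := by rw [hWsucc]; linarith
      have hWp_nn : (0:ℝ) ≤ Wseq w (n+1) ^ j / (Nat.factorial j : ℝ) := by
        apply div_nonneg (pow_nonneg (le_of_lt hWs_pos) _) (by positivity)
      have IH := ih hn hwn h1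
      rw [Hdecomp]
      have hterm : ∀ a ∈ range (ν+1),
          w (n+1) ^ a / (Nat.factorial a : ℝ) * HW w n ν ((n+1)*j - (n+1)*a)
          ≤ D * (if a ≤ j
              then Mseq w n * (w (n+1) ^ a / (Nat.factorial a : ℝ)
                * (X^(j-a)/(Nat.factorial (j-a) : ℝ)))
              else w (n+1) ^ a / (Nat.factorial a : ℝ)) := by
        intro a _
        have hwa : (0:ℝ) ≤ w (n+1) ^ a / (Nat.factorial a : ℝ) := by positivity
        by_cases haj : a ≤ j
        · rw [if_pos haj]
          set b := j - a with hb
          have hj' : j = a + b := by omega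
          have hKeq : (n+1)*j - (n+1)*a = (n+1)*b := by
            rw [hj', Nat.mul_add, Nat.add_sub_cancel_left]
          have hjbn : n * (b + b / n) ≤ (n+1) * b := by
            have h := Nat.div_mul_le_self b n
            calc n * (b + b/n) = n * b + b/n * n := by
                  rw [Nat.mul_add, Nat.mul_comm n (b/n)]
              _ ≤ n * b + b := Nat.add_le_add_left h _
              _ = (n+1) * b := by rw [Nat.succ_mul]
          have hmono := HW_anti (w := w) (m := n) hwn ν hjbn
          have hIH2 := IH ν (b + b/n)
          have hkey := key_ratio w n hn hWn b
          calc w (n+1)^a/(Nat.factorial a : ℝ) * HW w n ν ((n+1)*j - (n+1)*a)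
              = w (n+1)^a/(Nat.factorial a : ℝ) * HW w n ν ((n+1)*b) := by rw [hKeq]
            _ ≤ w (n+1)^a/(Nat.factorial a : ℝ) * HW w n ν (n*(b + b/n)) :=
                mul_le_mul_of_nonneg_left hmono hwa
            _ ≤ w (n+1)^a/(Nat.factorial a : ℝ)
                * (D * (Wseq w n ^ (b + b/n) / (Nat.factorial (b + b/n) : ℝ))) :=
                mul_le_mul_of_nonneg_left (hIH2) hwa
            _ ≤ w (n+1)^a/(Nat.factorial a : ℝ)
                * (D * (Mseq w n * (X^b/(Nat.factorial b : ℝ)))) := by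
                apply mul_le_mul_of_nonneg_left _ hwa
                exact mul_le_mul_of_nonneg_left hkey (le_of_lt hDpos)
            _ = D * (Mseq w n * (w (n+1)^a/(Nat.factorial a : ℝ)
                * (X^b/(Nat.factorial b : ℝ)))) := by ring
        · rw [if_neg haj]
          have hK0 : (n+1)*j - (n+1)*a = 0 :=
            Nat.sub_eq_zero_of_le (Nat.mul_le_mul_left _ (by omega))
          have hIH0 := IH ν 0
          rw [Nat.mul_zero] at hIH0
          have hHW0 : HW w n ν 0 ≤ D := by
            refine le_trans hIH0 (le_of_eq ?_)
            rw [pow_zero, Nat.factorial_zero]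
            norm_num
          calc w (n+1)^a/(Nat.factorial a : ℝ) * HW w n ν ((n+1)*j-(n+1)*a)
              = w (n+1)^a/(Nat.factorial a : ℝ) * HW w n ν 0 := by rw [hK0]
            _ ≤ w (n+1)^a/(Nat.factorial a : ℝ) * D := mul_le_mul_of_nonneg_left hHW0 hwa
            _ = D * (w (n+1)^a/(Nat.factorial a : ℝ)) := by ring
      refine le_trans (Finset.sum_le_sum hterm) ?_
      rw [← Finset.mul_sum, Finset.sum_ite]
      have hsum1 : ∑ a ∈ (range (ν+1)).filter (fun a => a ≤ j),
          Mseq w n * (w (n+1)^a/(Nat.factorial a : ℝ) * (X^(j-a)/(Nat.factorial (j-a) : ℝ)))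
          ≤ Mseq w n * (Wseq w (n+1) ^ j / (Nat.factorial j : ℝ)) := by
        rw [← Finset.mul_sum]
        apply mul_le_mul_of_nonneg_left _ (by linarith : (0:ℝ) ≤ Mseq w n)
        calc ∑ a ∈ (range (ν+1)).filter (fun a => a ≤ j),
            w (n+1)^a/(Nat.factorial a : ℝ) * (X^(j-a)/(Nat.factorial (j-a) : ℝ))
            ≤ ∑ a ∈ range (j+1), w (n+1)^a/(Nat.factorial a : ℝ)
                * (X^(j-a)/(Nat.factorial (j-a) : ℝ)) := by
              apply Finset.sum_le_sum_of_subset_of_nonneg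
              · intro a ha
                simp only [Finset.mem_filter, Finset.mem_range] at ha ⊢
                omega
              · intro a _ _
                exact mul_nonneg (div_nonneg (pow_nonneg hwn1 _) (by positivity))
                  (div_nonneg (pow_nonneg (le_of_lt hXpos) _) (by positivity))
          _ = (w (n+1) + X)^j / (Nat.factorial j : ℝ) := binom_id _ _ j
          _ = Wseq w (n+1) ^ j / (Nat.factorial j : ℝ) := by rw [← hWsucc]
      have hsum2 : ∑ a ∈ (range (ν+1)).filter (fun a => ¬ a ≤ j),
          w (n+1)^a/(Nat.factorial a : ℝ)
          ≤ (Wseq w (n+1) ^ j / (Nat.factorial j : ℝ)) * (Real.exp (w (n+1)) - 1) := by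
        have hfe : (range (ν+1)).filter (fun a => ¬ a ≤ j)
            = (range (ν+1)).filter (fun a => j + 1 ≤ a) := by
          apply Finset.filter_congr
          intro a _
          constructor
          · intro h; omega
          · intro h; omega
        rw [hfe]
        refine le_trans (tail_two hwn1 ν j) ?_
        apply mul_le_mul_of_nonneg_right _ (by linarith [Real.one_le_exp hwn1])
        gcongr
        · rw [hWsucc]; linarith
      have hexp1 : (1:ℝ) ≤ Real.exp (w (n+1)) := Real.one_le_exp hwn1
      have hMe : Mseq w n + (Real.exp (w (n+1)) - 1) ≤ Mseq w n * Real.exp (w (n+1)) := by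
        nlinarith [hMn, hexp1]
      calc D * ((∑ a ∈ (range (ν+1)).filter (fun a => a ≤ j),
            Mseq w n * (w (n+1)^a/(Nat.factorial a : ℝ) * (X^(j-a)/(Nat.factorial (j-a) : ℝ))))
          + ∑ a ∈ (range (ν+1)).filter (fun a => ¬ a ≤ j), w (n+1)^a/(Nat.factorial a : ℝ))
          ≤ D * (Mseq w n * (Wseq w (n+1) ^ j / (Nat.factorial j : ℝ))
            + (Wseq w (n+1) ^ j / (Nat.factorial j : ℝ)) * (Real.exp (w (n+1)) - 1)) :=
            mul_le_mul_of_nonneg_left (add_le_add hsum1 hsum2) (le_of_lt hDpos)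
        _ = (D * (Wseq w (n+1) ^ j / (Nat.factorial j : ℝ)))
            * (Mseq w n + (Real.exp (w (n+1)) - 1)) := by ring
        _ ≤ (D * (Wseq w (n+1) ^ j / (Nat.factorial j : ℝ)))
            * (Mseq w n * Real.exp (w (n+1))) :=
            mul_le_mul_of_nonneg_left hMe (mul_nonneg (le_of_lt hDpos) hWp_nn)
        _ = Real.exp (∑ i ∈ Icc 1 (n+1), w i) * (∏ i ∈ Icc 1 (n+1-1), Mseq w i)
            * (Wseq w (n+1) ^ j / (Nat.factorial j : ℝ)) := by
            rw [show n+1-1 = n from rfl]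
            rw [Finset.sum_Icc_succ_top (by omega : 1 ≤ n+1) w, Real.exp_add]
            obtain ⟨n', rfl⟩ : ∃ n', n = n' + 1 := ⟨n - 1, by omega⟩
            rw [Finset.prod_Icc_succ_top (by omega : 1 ≤ n'+1) (fun i => Mseq w i)]
            rw [hD, show n'+1-1 = n' from rfl]
            ring
      done


def possum (n : ℕ) (s : Fin n → ℤ) : ℕ := ∑ i, (s i).toNat

def fac (q : ℤ → ℝ) (v : ℤ) : ℝ := if v = 0 then q 0 else max (q v) (q (-v))

lemma modW_nonneg {q : ℤ → ℝ} {m : ℕ} (hq : ∀ l : ℤ, -(m:ℤ) ≤ l → l ≤ m → 0 ≤ q l)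
    {ν : ℕ} {s : Fin ν → ℤ} (hs : s ∈ paths ν m) : 0 ≤ modWeight ν q s := by
  unfold modWeight
  apply Finset.prod_nonneg
  intro i _
  have hsi := (Fintype.mem_piFinset.mp hs) i
  simp only [Finset.mem_Icc] at hsi
  split
  · exact hq 0 (by omega) (by omega)
  · exact le_trans (hq (s i) hsi.1 hsi.2) (le_max_left _ _)

lemma L1 (q : ℤ → ℝ) (m : ℕ) (hm : 1 ≤ m)
    (hq : ∀ l : ℤ, -(m:ℤ) ≤ l → l ≤ m → 0 ≤ q l)
    (hmass : ∑ v ∈ Finset.Icc (-(m:ℤ)) 0, fac q v ≤ 1) :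
    ∀ ν K, ∑ s ∈ (paths ν m).filter (fun s => K ≤ possum ν s), modWeight ν q s
      ≤ HW (fun i => (ν:ℝ) * max (q (i:ℤ)) (q (-(i:ℤ)))) m ν K := by
  have hρnn : ∀ k, 1 ≤ k → k ≤ m → 0 ≤ max (q (k:ℤ)) (q (-(k:ℤ))) := by
    intro k h1 h2
    refine le_trans (hq (k:ℤ) (by omega) (by exact_mod_cast h2)) (le_max_left _ _)
  intro ν
  induction ν with
  | zero =>
    intro K
    have hw0 : ∀ k, 1 ≤ k → k ≤ m
        → 0 ≤ (fun i => ((0:ℕ):ℝ) * max (q (i:ℤ)) (q (-(i:ℤ)))) k := by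
      intro k _ _; simp
    rcases Nat.eq_zero_or_pos K with rfl | hK
    · refine le_trans ?_ (HW_one_le hw0 0)
      have hmw : ∀ s : Fin 0 → ℤ, modWeight 0 q s = 1 := by
        intro s; unfold modWeight; simp
      calc ∑ s ∈ (paths 0 m).filter (fun s => 0 ≤ possum 0 s), modWeight 0 q s
          = ∑ s ∈ (paths 0 m).filter (fun s => 0 ≤ possum 0 s), 1 :=
            Finset.sum_congr rfl (fun s _ => hmw s)
        _ = ((paths 0 m).filter (fun s => 0 ≤ possum 0 s)).card := by simp
        _ ≤ 1 := by
            have hcard : ((paths 0 m).filter (fun s => 0 ≤ possum 0 s)).card ≤ 1 :=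
              Finset.card_le_one.mpr (fun a _ b _ => Subsingleton.elim a b)
            exact_mod_cast hcard
    · have hemp : (paths 0 m).filter (fun s => K ≤ possum 0 s) = ∅ := by
        apply Finset.filter_false_of_mem
        intro s _
        have : possum 0 s = 0 := by unfold possum; simp
        omega
      rw [hemp, Finset.sum_empty]
      exact HW_nonneg hw0 0 K
  | succ ν ih =>
    intro K
    have hdec : ∑ s ∈ (paths (ν+1) m).filter (fun s => K ≤ possum (ν+1) s), modWeight (ν+1) q s
        = ∑ v ∈ Finset.Icc (-(m:ℤ)) (m:ℤ), fac q v *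
            ∑ t ∈ (paths ν m).filter (fun t => K - (v.toNat) ≤ possum ν t), modWeight ν q t := by
      rw [Finset.sum_filter]
      unfold paths
      rw [sum_piFinset_succ]
      apply Finset.sum_congr rfl
      intro v _
      rw [Finset.mul_sum, Finset.sum_filter]
      apply Finset.sum_congr rfl
      intro t _
      have hps : possum (ν+1) (Fin.snoc t v) = possum ν t + v.toNat := by
        unfold possum
        rw [Fin.sum_univ_castSucc]
        simp [Fin.snoc_castSucc, Fin.snoc_last]
      have hmw : modWeight (ν+1) q (Fin.snoc t v) = modWeight ν q t * fac q v := by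
        unfold modWeight fac
        rw [Fin.prod_univ_castSucc]
        simp only [Fin.snoc_castSucc, Fin.snoc_last]
      rw [hps, hmw]
      have hcond : (K ≤ possum ν t + v.toNat) ↔ (K - v.toNat ≤ possum ν t) := by omega
      by_cases h : K - v.toNat ≤ possum ν t
      · rw [if_pos (hcond.mpr h), if_pos h]; ring
      · rw [if_neg (fun hh => h (hcond.mp hh)), if_neg h]
    rw [hdec]
    have hsplit : Finset.Icc (-(m:ℤ)) (m:ℤ) = Finset.Icc (-(m:ℤ)) 0 ∪ Finset.Icc 1 (m:ℤ) := by
      ext x; simp only [Finset.mem_Icc, Finset.mem_union]; omega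
    have hdisj : Disjoint (Finset.Icc (-(m:ℤ)) 0) (Finset.Icc 1 (m:ℤ)) := by
      simp only [Finset.disjoint_left, Finset.mem_Icc]
      intro a ha hb; omega
    rw [hsplit, Finset.sum_union hdisj]
    have hTnn : ∀ K', 0 ≤ ∑ t ∈ (paths ν m).filter (fun t => K' ≤ possum ν t),
        modWeight ν q t := by
      intro K'
      apply Finset.sum_nonneg
      intro t ht
      exact modW_nonneg hq (Finset.mem_filter.mp ht).1
    have hneg : ∑ v ∈ Finset.Icc (-(m:ℤ)) 0, fac q v *
        (∑ t ∈ (paths ν m).filter (fun t => K - v.toNat ≤ possum ν t), modWeight ν q t)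
        ≤ HW (fun i => (ν:ℝ) * max (q (i:ℤ)) (q (-(i:ℤ)))) m ν K := by
      have hv0 : ∀ v ∈ Finset.Icc (-(m:ℤ)) 0, K - v.toNat = K := by
        intro v hv; simp only [Finset.mem_Icc] at hv; omega
      calc ∑ v ∈ Finset.Icc (-(m:ℤ)) 0, fac q v *
            (∑ t ∈ (paths ν m).filter (fun t => K - v.toNat ≤ possum ν t), modWeight ν q t)
          = ∑ v ∈ Finset.Icc (-(m:ℤ)) 0, fac q v *
            (∑ t ∈ (paths ν m).filter (fun t => K ≤ possum ν t), modWeight ν q t) :=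
            Finset.sum_congr rfl (fun v hv => by rw [hv0 v hv])
        _ = (∑ v ∈ Finset.Icc (-(m:ℤ)) 0, fac q v) *
            (∑ t ∈ (paths ν m).filter (fun t => K ≤ possum ν t), modWeight ν q t) := by
            rw [Finset.sum_mul]
        _ ≤ 1 * (∑ t ∈ (paths ν m).filter (fun t => K ≤ possum ν t), modWeight ν q t) :=
            mul_le_mul_of_nonneg_right hmass (hTnn K)
        _ = ∑ t ∈ (paths ν m).filter (fun t => K ≤ possum ν t), modWeight ν q t := one_mul _
        _ ≤ HW (fun i => (ν:ℝ) * max (q (i:ℤ)) (q (-(i:ℤ)))) m ν K := ih K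
    have hpos : ∑ v ∈ Finset.Icc (1:ℤ) (m:ℤ), fac q v *
        (∑ t ∈ (paths ν m).filter (fun t => K - v.toNat ≤ possum ν t), modWeight ν q t)
        ≤ ∑ i : Fin m, max (q (((i:ℕ)+1 : ℕ):ℤ)) (q (-(((i:ℕ)+1 : ℕ):ℤ)))
            * HW (fun i' => (ν:ℝ) * max (q (i':ℤ)) (q (-(i':ℤ)))) m ν (K - ((i:ℕ)+1)) := by
      rw [Fin.sum_univ_eq_sum_range (fun k => max (q ((k+1 : ℕ):ℤ)) (q (-((k+1 : ℕ):ℤ)))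
            * HW (fun i' => (ν:ℝ) * max (q (i':ℤ)) (q (-(i':ℤ)))) m ν (K - (k+1)))]
      rw [show ∑ k ∈ range m, (max (q ((k+1 : ℕ):ℤ)) (q (-((k+1 : ℕ):ℤ)))
            * HW (fun i' => (ν:ℝ) * max (q (i':ℤ)) (q (-(i':ℤ)))) m ν (K - (k+1)))
          = ∑ v ∈ Finset.Icc (1:ℤ) (m:ℤ), (max (q ((v.toNat : ℕ):ℤ)) (q (-((v.toNat : ℕ):ℤ)))
            * HW (fun i' => (ν:ℝ) * max (q (i':ℤ)) (q (-(i':ℤ)))) m ν (K - v.toNat)) from ?_]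
      · apply Finset.sum_le_sum
        intro v hv
        simp only [Finset.mem_Icc] at hv
        have hfv : fac q v = max (q ((v.toNat : ℕ):ℤ)) (q (-((v.toNat : ℕ):ℤ))) := by
          unfold fac
          rw [if_neg (by omega), show ((v.toNat : ℕ):ℤ) = v by omega]
        rw [hfv]
        apply mul_le_mul_of_nonneg_left (ih (K - v.toNat))
        exact hρnn v.toNat (by omega) (by omega)
      · apply Finset.sum_nbij' (i := fun k : ℕ => ((k:ℤ) + 1)) (j := fun v : ℤ => v.toNat - 1)
        · intro k hk
          simp only [Finset.mem_range] at hk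
          simp only [Finset.mem_Icc]
          omega
        · intro v hv
          simp only [Finset.mem_Icc] at hv
          simp only [Finset.mem_range]
          omega
        · intro k _
          omega
        · intro v hv
          simp only [Finset.mem_Icc] at hv
          omega
        · intro k hk
          simp only [Finset.mem_range] at hk
          rw [show (((k:ℤ)+1)).toNat = k + 1 by omega]
    have hL2 := L2 (fun i => max (q (i:ℤ)) (q (-(i:ℤ)))) m hρnn ν K
    refine le_trans (add_le_add hneg hpos) (le_trans hL2 (le_of_eq ?_))
    congr 1
    funext i
    push_cast
    ring


lemma C1a {w : ℕ → ℝ} {i : ℕ} (hi : 2 ≤ i) (hW : 0 < Wseq w i) :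
    Real.exp (Wseq w i - Wseq w i ^ (((i:ℝ)+1)/(i:ℝ))) ≤ Mseq w i := by
  have hiR : (0:ℝ) < (i:ℝ) := by exact_mod_cast (by omega : 0 < i)
  have h2i : (2:ℝ) ≤ (i:ℝ) := by exact_mod_cast hi
  set W := Wseq w i with hWd
  rcases le_or_gt 1 W with h1 | h1
  · have hmono : W ^ ((1:ℝ)) ≤ W ^ (((i:ℝ)+1)/(i:ℝ)) :=
      Real.rpow_le_rpow_of_exponent_le h1 (by rw [le_div_iff₀ hiR]; linarith)
    rw [Real.rpow_one] at hmono
    calc Real.exp (W - W ^ (((i:ℝ)+1)/(i:ℝ))) ≤ Real.exp 0 :=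
        Real.exp_le_exp.mpr (by linarith)
      _ = 1 := Real.exp_zero
      _ ≤ Mseq w i := Mge1 (by omega) hW
  · set u := W ^ ((1:ℝ)/(i:ℝ)) with hu
    have hupos : 0 < u := Real.rpow_pos_of_pos hW _
    have hule : u ≤ 1 := Real.rpow_le_one (le_of_lt hW) (le_of_lt h1) (by positivity)
    have hsplit : W ^ (((i:ℝ)+1)/(i:ℝ)) = W * u := by
      have he : ((i:ℝ)+1)/(i:ℝ) = 1 + 1/(i:ℝ) := by field_simp
      rw [hu, he, Real.rpow_add hW, Real.rpow_one]
    have hlog : 1 - u ≤ -Real.log u := by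
      have := Real.log_le_sub_one_of_pos hupos
      linarith
    have hlogu : Real.log u = (1/(i:ℝ)) * Real.log W := Real.log_rpow hW _
    have hlogW : Real.log W ≤ 0 := Real.log_nonpos (le_of_lt hW) (le_of_lt h1)
    have hXpos : 0 < W ^ ((1-(i:ℝ))/(i:ℝ)) := Real.rpow_pos_of_pos hW _
    have hlogM : W - W ^ (((i:ℝ)+1)/(i:ℝ)) ≤ Real.log (W ^ ((1-(i:ℝ))/(i:ℝ))) := by
      rw [Real.log_rpow hW, hsplit]
      have e1 : W - W*u = W*(1-u) := by ring
      have e2 : ((1-(i:ℝ))/(i:ℝ)) * Real.log W = (((i:ℝ)-1)/(i:ℝ)) * (-Real.log W) := by ring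
      rw [e1, e2]
      have step1 : W * (1-u) ≤ 1 * (1-u) :=
        mul_le_mul_of_nonneg_right (le_of_lt h1) (by linarith)
      have step4 : -Real.log u = (1/(i:ℝ)) * (-Real.log W) := by rw [hlogu]; ring
      have step5 : (1/(i:ℝ)) * (-Real.log W) ≤ (((i:ℝ)-1)/(i:ℝ)) * (-Real.log W) := by
        apply mul_le_mul_of_nonneg_right _ (by linarith)
        rw [div_le_div_iff_of_pos_right hiR]
        linarith
      linarith
    calc Real.exp (W - W ^ (((i:ℝ)+1)/(i:ℝ)))
        ≤ Real.exp (Real.log (W ^ ((1-(i:ℝ))/(i:ℝ)))) := Real.exp_le_exp.mpr hlogM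
      _ = W ^ ((1-(i:ℝ))/(i:ℝ)) := Real.exp_log hXpos
      _ ≤ Mseq w i := le_max_right _ _

lemma C1 (w : ℕ → ℝ) (m : ℕ) (hm : 1 ≤ m) (h1 : 0 < w 1)
    (hw : ∀ k, 1 ≤ k → k ≤ m → 0 ≤ w k) :
    Real.exp (∑ i ∈ Icc 1 m, w i)
      ≤ 4 * Real.exp (Wseq w m) * ∏ i ∈ Icc 1 (m-1), Mseq w i := by
  rw [TS w m hm, Real.exp_add, Real.exp_sum]
  have hWi : ∀ i ∈ Icc 1 (m-1), 0 < Wseq w i := by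
    intro i hi; simp only [Finset.mem_Icc] at hi
    exact Wpos w h1 i hi.1 (fun k a b => hw k (by omega) (by omega))
  have hstreak : ∏ i ∈ Icc 1 (m-1), Real.exp (Wseq w i - Wseq w i ^ (((i:ℝ)+1)/(i:ℝ)))
      ≤ 4 * ∏ i ∈ Icc 1 (m-1), Mseq w i := by
    rcases Nat.eq_zero_or_pos (m-1) with h0 | hpos1
    · rw [h0]
      rw [show Icc 1 0 = (∅ : Finset ℕ) from rfl]
      simp only [Finset.prod_empty, mul_one]
      norm_num
    · have h1mem : (1:ℕ) ∈ Icc 1 (m-1) := by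
        simp only [Finset.mem_Icc]; omega
      rw [← Finset.mul_prod_erase _ _ h1mem,
        ← Finset.mul_prod_erase _ (fun i => Mseq w i) h1mem]
      have hW1 : 0 < Wseq w 1 := hWi 1 h1mem
      have hf1 : Real.exp (Wseq w 1 - Wseq w 1 ^ ((((1:ℕ):ℝ)+1)/((1:ℕ):ℝ))) ≤ 4 := by
        have hrw : Wseq w 1 ^ ((((1:ℕ):ℝ)+1)/((1:ℕ):ℝ)) = Wseq w 1 ^ (2:ℕ) := by
          rw [show ((((1:ℕ):ℝ)+1)/((1:ℕ):ℝ)) = ((2:ℕ):ℝ) by norm_num, Real.rpow_natCast]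
        rw [hrw]
        have hb : Wseq w 1 - Wseq w 1^(2:ℕ) ≤ 1/4 := by
          nlinarith [sq_nonneg (Wseq w 1 - 1/2)]
        calc Real.exp (Wseq w 1 - Wseq w 1^(2:ℕ)) ≤ Real.exp 1 :=
            Real.exp_le_exp.mpr (by linarith)
          _ ≤ 4 := le_of_lt (lt_trans Real.exp_one_lt_d9 (by norm_num))
      have hrest : ∏ i ∈ (Icc 1 (m-1)).erase 1,
          Real.exp (Wseq w i - Wseq w i ^ (((i:ℝ)+1)/(i:ℝ)))
          ≤ ∏ i ∈ (Icc 1 (m-1)).erase 1, Mseq w i := by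
        apply Finset.prod_le_prod (fun i _ => (Real.exp_pos _).le)
        intro i hi
        have hi' := Finset.mem_of_mem_erase hi
        have hne := Finset.ne_of_mem_erase hi
        have hi'' := hi'
        simp only [Finset.mem_Icc] at hi''
        exact C1a (by omega) (hWi i hi')
      have hM1 : 1 ≤ Mseq w 1 := Mge1 le_rfl hW1
      have hPnn : 0 ≤ ∏ i ∈ (Icc 1 (m-1)).erase 1, Mseq w i :=
        Finset.prod_nonneg (fun i hi => le_trans zero_le_one
          (Mge1 (by have := Finset.mem_of_mem_erase hi; simp only [Finset.mem_Icc] at this; omega)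
            (hWi i (Finset.mem_of_mem_erase hi))))
      calc Real.exp (Wseq w 1 - Wseq w 1 ^ ((((1:ℕ):ℝ)+1)/((1:ℕ):ℝ)))
            * ∏ i ∈ (Icc 1 (m-1)).erase 1,
              Real.exp (Wseq w i - Wseq w i ^ (((i:ℝ)+1)/(i:ℝ)))
          ≤ 4 * ∏ i ∈ (Icc 1 (m-1)).erase 1, Mseq w i := by
            apply mul_le_mul hf1 hrest (Finset.prod_nonneg fun i _ => (Real.exp_pos _).le)
              (by norm_num)
        _ ≤ 4 * (Mseq w 1 * ∏ i ∈ (Icc 1 (m-1)).erase 1, Mseq w i) := by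
            have := le_mul_of_one_le_left hPnn hM1
            linarith
  calc Real.exp (Wseq w m) * ∏ i ∈ Icc 1 (m-1),
        Real.exp (Wseq w i - Wseq w i ^ (((i:ℝ)+1)/(i:ℝ)))
      ≤ Real.exp (Wseq w m) * (4 * ∏ i ∈ Icc 1 (m-1), Mseq w i) :=
        mul_le_mul_of_nonneg_left hstreak (Real.exp_pos _).le
    _ = 4 * Real.exp (Wseq w m) * ∏ i ∈ Icc 1 (m-1), Mseq w i := by ring

lemma mass_le_one (q : ℤ → ℝ) (m : ℕ) (hm : 1 ≤ m)
    (hq : ∀ l : ℤ, -(m:ℤ) ≤ l → l ≤ m → 0 ≤ q l)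
    (hsum : ∑ l ∈ Finset.Icc (-(m:ℤ)) (m:ℤ), q l = 1) :
    ∑ v ∈ Finset.Icc (-(m:ℤ)) 0, fac q v ≤ 1 := by
  have hsplit : Finset.Icc (-(m:ℤ)) 0 = insert 0 (Finset.Icc (-(m:ℤ)) (-1)) := by
    ext x
    simp only [Finset.mem_Icc, Finset.mem_insert]
    omega
  have h0notin : (0:ℤ) ∉ Finset.Icc (-(m:ℤ)) (-1) := by
    simp only [Finset.mem_Icc]; omega
  rw [hsplit, Finset.sum_insert h0notin]
  have hfac0 : fac q 0 = q 0 := if_pos rfl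
  have hbound : ∀ v ∈ Finset.Icc (-(m:ℤ)) (-1), fac q v ≤ q v + q (-v) := by
    intro v hv
    simp only [Finset.mem_Icc] at hv
    unfold fac
    rw [if_neg (by omega)]
    exact max_le_add_of_nonneg (hq v (by omega) (by omega)) (hq (-v) (by omega) (by omega))
  have hneg_reflect : ∑ v ∈ Finset.Icc (-(m:ℤ)) (-1), q (-v)
      = ∑ v ∈ Finset.Icc (1:ℤ) (m:ℤ), q v := by
    apply Finset.sum_nbij' (i := fun v : ℤ => -v) (j := fun v : ℤ => -v)
    · intro v hv; simp only [Finset.mem_Icc] at hv ⊢; omega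
    · intro v hv; simp only [Finset.mem_Icc] at hv ⊢; omega
    · intro v _; ring
    · intro v _; ring
    · intro v _; rfl
  have hpart : ∑ l ∈ Finset.Icc (-(m:ℤ)) (m:ℤ), q l
      = (q 0 + ∑ v ∈ Finset.Icc (-(m:ℤ)) (-1), q v) + ∑ v ∈ Finset.Icc (1:ℤ) (m:ℤ), q v := by
    rw [show Finset.Icc (-(m:ℤ)) (m:ℤ) = Finset.Icc (-(m:ℤ)) 0 ∪ Finset.Icc 1 (m:ℤ) from by
        ext x; simp only [Finset.mem_Icc, Finset.mem_union]; omega]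
    rw [Finset.sum_union (by
        simp only [Finset.disjoint_left, Finset.mem_Icc]
        intro a h1 h2; omega)]
    rw [hsplit, Finset.sum_insert h0notin]
  have hchain : ∑ v ∈ Finset.Icc (-(m:ℤ)) (-1), fac q v
      ≤ ∑ v ∈ Finset.Icc (-(m:ℤ)) (-1), (q v + q (-v)) := Finset.sum_le_sum hbound
  rw [Finset.sum_add_distrib, hneg_reflect] at hchain
  rw [hfac0]
  rw [hpart] at hsum
  linarith

end HSaux


open HScut HSaux

/-- For every integer `k̄` with `m ⌈2W_m − 1⌉ ≤ k̄ ≤ m n` one has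
`∑_{k=k̄}^{mn} q̃^{(n)}(k) ≤ 2 G m · W_m^{⌊k̄/m⌋} / ⌊k̄/m⌋!`. -/
theorem qtilde_tail_sum_bound_general (n m : ℕ) (hn : 1 ≤ n) (hm : 1 ≤ m) (q : ℤ → ℝ)
    (hq : ∀ l : ℤ, -(m : ℤ) ≤ l → l ≤ (m : ℤ) → 0 ≤ q l)
    (hsum : ∑ l ∈ Finset.Icc (-(m : ℤ)) (m : ℤ), q l = 1)
    (hq1 : 0 < max (q 1) (q (-1)))
    (wf : ℕ → ℝ) (hwf : ∀ i : ℕ, wf i = (n : ℝ) * max (q (i : ℤ)) (q (-(i : ℤ))))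
    (kbar : ℕ) (hk1 : (m : ℤ) * ⌈2 * Wseq wf m - 1⌉ ≤ (kbar : ℤ)) (hk2 : kbar ≤ m * n) :
    (∑ k ∈ Finset.Icc kbar (m * n), qtilde n m q (k : ℤ)) ≤
      2 * Gconst wf m * m * Wseq wf m ^ (kbar / m) / (Nat.factorial (kbar / m) : ℝ) := by
  classical
  have hwf_eq : wf = fun i : ℕ => (n:ℝ) * max (q (i:ℤ)) (q (-(i:ℤ))) := funext fun i => hwf i
  have hwfnn : ∀ k, 1 ≤ k → k ≤ m → 0 ≤ wf k := by
    intro k h1 h2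
    rw [hwf k]
    apply mul_nonneg (by positivity)
    exact le_trans (hq (k:ℤ) (by omega) (by exact_mod_cast h2)) (le_max_left _ _)
  have hwf1 : 0 < wf 1 := by
    rw [hwf 1]
    have h1 : ((1:ℕ):ℤ) = (1:ℤ) := by norm_num
    rw [h1, show (-(1:ℤ)) = (-1 : ℤ) from rfl]
    have hnp : (0:ℝ) < (n:ℝ) := by exact_mod_cast hn
    exact mul_pos hnp hq1
  have hWpos : 0 < Wseq wf m := Wpos wf hwf1 m hm (fun k a b => hwfnn k (by omega) b)
  have hPge1 : (1:ℝ) ≤ ∏ i ∈ Finset.Icc 1 (m-1), Mseq wf i := by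
    calc (1:ℝ) = ∏ _i ∈ Finset.Icc 1 (m-1), (1:ℝ) := by simp
      _ ≤ ∏ i ∈ Finset.Icc 1 (m-1), Mseq wf i := by
        apply Finset.prod_le_prod (fun i _ => zero_le_one)
        intro i hi
        simp only [Finset.mem_Icc] at hi
        exact Mge1 hi.1 (Wpos wf hwf1 i hi.1 (fun k a b => hwfnn k (by omega) (by omega)))
  have hlev_sum : ∀ s : Fin n → ℤ, levelAt n s n = ∑ i, s i := by
    intro s
    unfold levelAt
    apply Finset.sum_congr _ (fun _ _ => rfl)
    apply Finset.filter_true_of_mem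
    intro i _
    exact i.isLt
  have hlev_le : ∀ s ∈ paths n m, levelAt n s n ≤ (m:ℤ)*n := by
    intro s hs
    rw [hlev_sum s]
    calc ∑ i, s i ≤ ∑ _i : Fin n, (m:ℤ) := by
          apply Finset.sum_le_sum
          intro i _
          exact (Finset.mem_Icc.mp ((Fintype.mem_piFinset.mp hs) i)).2
      _ = (n:ℤ)*m := by
          rw [Finset.sum_const, Finset.card_univ, Fintype.card_fin]
          push_cast
          ring
      _ = (m:ℤ)*n := by ring
  have hlev_pos : ∀ s : Fin n → ℤ, levelAt n s n ≤ (possum n s : ℤ) := by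
    intro s
    rw [hlev_sum s]
    calc ∑ i, s i ≤ ∑ i, ((s i).toNat : ℤ) :=
          Finset.sum_le_sum (fun i _ => Int.self_le_toNat _)
      _ = (possum n s : ℤ) := by
          unfold possum
          push_cast
          rfl
  have hbig : ∑ k ∈ Finset.Icc kbar (m*n), qtilde n m q (k:ℤ)
      = ∑ s ∈ (paths n m).filter (fun s => (kbar:ℤ) ≤ levelAt n s n), modWeight n q s := by
    have hmap : ∀ s ∈ (paths n m).filter (fun s => (kbar:ℤ) ≤ levelAt n s n),
        (levelAt n s n).toNat ∈ Finset.Icc kbar (m*n) := by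
      intro s hs
      obtain ⟨hs1, hs2⟩ := Finset.mem_filter.mp hs
      have := hlev_le s hs1
      simp only [Finset.mem_Icc]
      omega
    rw [← Finset.sum_fiberwise_of_maps_to hmap (fun s => modWeight n q s)]
    apply Finset.sum_congr rfl
    intro k hk
    simp only [Finset.mem_Icc] at hk
    unfold qtilde
    rw [Finset.filter_filter]
    apply Finset.sum_congr _ (fun _ _ => rfl)
    apply Finset.filter_congr
    intro s _
    constructor
    · intro h
      omega
    · intro ⟨h1, h2⟩
      omega
  rw [hbig]
  have hstep2 : ∑ s ∈ (paths n m).filter (fun s => (kbar:ℤ) ≤ levelAt n s n), modWeight n q s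
      ≤ ∑ s ∈ (paths n m).filter (fun s => kbar ≤ possum n s), modWeight n q s := by
    apply Finset.sum_le_sum_of_subset_of_nonneg
    · intro s hs
      obtain ⟨hs1, hs2⟩ := Finset.mem_filter.mp hs
      have := hlev_pos s
      rw [Finset.mem_filter]
      exact ⟨hs1, by omega⟩
    · intro s hs _
      exact modW_nonneg hq (Finset.mem_filter.mp hs).1
  have hmass := mass_le_one q m hm hq hsum
  have hstep3 := L1 q m hm hq hmass n kbar
  rw [← hwf_eq] at hstep3
  have hmj : m * (kbar / m) ≤ kbar := by
    calc m * (kbar / m) = (kbar / m) * m := by ring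
      _ ≤ kbar := Nat.div_mul_le_self kbar m
  have hstep4 := HW_anti (w := wf) (m := m) hwfnn n hmj
  have hstep5 := LA wf m hm hwfnn hwf1 n (kbar / m)
  have hC1 := C1 wf m hm hwf1 hwfnn
  have hWpj : (0:ℝ) ≤ Wseq wf m ^ (kbar / m) / (Nat.factorial (kbar / m) : ℝ) := by
    apply div_nonneg (pow_nonneg (le_of_lt hWpos) _) (by positivity)
  have hPnn : (0:ℝ) ≤ ∏ i ∈ Finset.Icc 1 (m-1), Mseq wf i := le_trans zero_le_one hPge1
  have hfin : Real.exp (∑ i ∈ Finset.Icc 1 m, wf i) * ∏ i ∈ Finset.Icc 1 (m-1), Mseq wf i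
      ≤ 4 * (m:ℝ)^2 * max (Wseq wf m) 1 * Real.exp (Wseq wf m)
        * (∏ i ∈ Finset.Icc 1 (m-1), Mseq wf i)^2 := by
    have hm2 : (1:ℝ) ≤ (m:ℝ)^2 * max (Wseq wf m) 1 := by
      have h1 : (1:ℝ) ≤ (m:ℝ) := by exact_mod_cast hm
      have h2 : (1:ℝ) ≤ max (Wseq wf m) 1 := le_max_right _ _
      nlinarith
    calc Real.exp (∑ i ∈ Finset.Icc 1 m, wf i) * ∏ i ∈ Finset.Icc 1 (m-1), Mseq wf i
        ≤ (4 * Real.exp (Wseq wf m) * ∏ i ∈ Finset.Icc 1 (m-1), Mseq wf i)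
          * ∏ i ∈ Finset.Icc 1 (m-1), Mseq wf i := mul_le_mul_of_nonneg_right hC1 hPnn
      _ = 4 * Real.exp (Wseq wf m) * (∏ i ∈ Finset.Icc 1 (m-1), Mseq wf i)^2 := by ring
      _ ≤ 4 * (m:ℝ)^2 * max (Wseq wf m) 1 * Real.exp (Wseq wf m)
          * (∏ i ∈ Finset.Icc 1 (m-1), Mseq wf i)^2 := by
          have hX : (0:ℝ) ≤ 4 * Real.exp (Wseq wf m)
              * (∏ i ∈ Finset.Icc 1 (m-1), Mseq wf i)^2 := by positivity
          nlinarith [mul_nonneg (sub_nonneg.mpr hm2) hX]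
  have hG : 2 * Gconst wf m * (m:ℝ) = 4 * (m:ℝ)^2 * max (Wseq wf m) 1 * Real.exp (Wseq wf m)
      * (∏ i ∈ Finset.Icc 1 (m-1), Mseq wf i)^2 := by
    unfold Gconst
    rw [← Finset.prod_pow]
    ring
  calc ∑ s ∈ (paths n m).filter (fun s => (kbar:ℤ) ≤ levelAt n s n), modWeight n q s
      ≤ HW wf m n kbar := le_trans hstep2 hstep3
    _ ≤ HW wf m n (m * (kbar / m)) := hstep4
    _ ≤ Real.exp (∑ i ∈ Finset.Icc 1 m, wf i) * (∏ i ∈ Finset.Icc 1 (m-1), Mseq wf i)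
        * (Wseq wf m ^ (kbar / m) / (Nat.factorial (kbar / m) : ℝ)) := hstep5
    _ ≤ (4 * (m:ℝ)^2 * max (Wseq wf m) 1 * Real.exp (Wseq wf m)
        * (∏ i ∈ Finset.Icc 1 (m-1), Mseq wf i)^2)
        * (Wseq wf m ^ (kbar / m) / (Nat.factorial (kbar / m) : ℝ)) :=
        mul_le_mul_of_nonneg_right hfin hWpj
    _ = 2 * Gconst wf m * m * Wseq wf m ^ (kbar / m) / (Nat.factorial (kbar / m) : ℝ) := by
        rw [← hG]
        ring
end
end
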